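/- Let f : [0,∞) → ℝ be C¹ with f(0)=f(1)=0, (1-u)f(u)>0 for u>0, u≠1, f'(0)>0, f'(1)<0, and f(u) ≤ f'(0)u for u ≥ 0. Set c₀ = 2√(f'(0)). Then for every c ≥ c₀ the problem q'' - c q' + f(q) = 0 on ℝ with q(-∞)=0, q(+∞)=1, q(0)=1/2 and q' > 0 on ℝ has a solution, and for every c < c₀ it has no solution. -/

import Mathlib

set_option maxHeartbeats 1600000

open Filter Set Real Topology MeasureTheory

noncomputable section

/-- Fisher-KPP (monostable) conditions (F) on the nonlinearity `f`. -/
def KPP (f : ℝ → ℝ) : Prop :=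
  ContDiff ℝ 1 f ∧ f 0 = 0 ∧ f 1 = 0 ∧
  (∀ u : ℝ, 0 < u → u ≠ 1 → (1 - u) * f u > 0) ∧
  0 < deriv f 0 ∧ deriv f 1 < 0 ∧ ∀ u : ℝ, 0 ≤ u → f u ≤ deriv f 0 * u

/-- The minimal speed `c₀ = 2√(f'(0))` of KPP traveling waves. -/
def c0 (f : ℝ → ℝ) : ℝ := 2 * Real.sqrt (deriv f 0)

/-- A KPP traveling wave of speed `c`: `q'' - c q' + f(q) = 0` on `ℝ`,
`q(-∞)=0`, `q(+∞)=1`, `q(0)=1/2`, `q' > 0`. -/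
def IsKPPWave (f : ℝ → ℝ) (c : ℝ) (q : ℝ → ℝ) : Prop :=
  ContDiff ℝ 2 q ∧
  (∀ z : ℝ, deriv (deriv q) z - c * deriv q z + f (q z) = 0) ∧
  Filter.Tendsto q Filter.atBot (nhds 0) ∧ Filter.Tendsto q Filter.atTop (nhds 1) ∧
  q 0 = 1 / 2 ∧ ∀ z : ℝ, 0 < deriv q z

/-- Gronwall-type sign propagation: if `h' ≤ g·h` on `[a,b]` and `h b ≥ 0`,
then `h ≥ 0` on all of `[a,b]`. -/
lemma gronwall_nonneg_left {a b : ℝ} {h dh g : ℝ → ℝ} (hab : a ≤ b)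
    (hgc : ContinuousOn g (Icc a b))
    (hhc : ContinuousOn h (Icc a b))
    (hd : ∀ x ∈ Ioo a b, HasDerivAt h (dh x) x)
    (hle : ∀ x ∈ Ioo a b, dh x ≤ g x * h x)
    (hb : 0 ≤ h b) : ∀ x ∈ Icc a b, 0 ≤ h x := by
  set cl : ℝ → ℝ := fun x => max a (min b x) with hcl
  have hclmem : ∀ x, cl x ∈ Icc a b := fun x =>
    ⟨le_max_left _ _, by simp only [hcl, max_le_iff]; exact ⟨hab, min_le_left _ _⟩⟩
  have hcleq : ∀ x ∈ Icc a b, cl x = x := by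
    intro x hx
    simp only [hcl]
    rw [min_eq_right hx.2, max_eq_right hx.1]
  have hg1 : Continuous (fun x => g (cl x)) := by
    apply hgc.comp_continuous
    · exact continuous_const.max (continuous_const.min continuous_id)
    · exact hclmem
  set g1 : ℝ → ℝ := fun x => g (cl x) with hg1def
  set G : ℝ → ℝ := fun x => ∫ t in a..x, g1 t with hGdef
  have hG : ∀ x : ℝ, HasDerivAt G (g1 x) x := by
    intro x
    exact intervalIntegral.integral_hasDerivAt_right
      (hg1.intervalIntegrable _ _)
      (hg1.stronglyMeasurableAtFilter _ _)
      hg1.continuousAt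
  have hGc : Continuous G := continuous_iff_continuousAt.2 fun x => (hG x).continuousAt
  set φ : ℝ → ℝ := fun x => h x * Real.exp (-G x) with hφdef
  have hφd : ∀ x ∈ Ioo a b, HasDerivAt φ
      (dh x * Real.exp (-G x) + h x * (Real.exp (-G x) * -g1 x)) x := by
    intro x hx
    exact (hd x hx).mul (((hG x).neg).exp)
  have hφanti : AntitoneOn φ (Icc a b) := by
    apply antitoneOn_of_deriv_nonpos (convex_Icc a b)
    · exact hhc.mul ((hGc.neg.rexp).continuousOn)
    · intro x hx
      rw [interior_Icc] at hx
      exact ((hφd x hx).differentiableAt).differentiableWithinAt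
    · intro x hx
      rw [interior_Icc] at hx
      rw [(hφd x hx).deriv]
      have hgx : g1 x = g x := by rw [hg1def]; simp only; rw [hcleq x (Ioo_subset_Icc_self hx)]
      have : dh x * Real.exp (-G x) + h x * (Real.exp (-G x) * -g1 x)
          = (dh x - g x * h x) * Real.exp (-G x) := by rw [hgx]; ring
      rw [this]
      apply mul_nonpos_of_nonpos_of_nonneg
      · linarith [hle x hx]
      · exact (Real.exp_pos _).le
  intro x hx
  have h1 : φ b ≤ φ x := hφanti hx (right_mem_Icc.2 hab) hx.2
  have h2 : 0 ≤ φ b := mul_nonneg hb (Real.exp_pos _).le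
  have h3 : 0 ≤ h x * Real.exp (-G x) := le_trans h2 h1
  nlinarith [Real.exp_pos (-G x)]


lemma quad_min {A B t : ℝ} (h1 : A ≤ t) (h2 : t ≤ B) :
    min (A * (1 - A)) (B * (1 - B)) ≤ t * (1 - t) := by
  rcases le_total (t + A) 1 with h | h
  · calc min (A * (1 - A)) (B * (1 - B)) ≤ A * (1 - A) := min_le_left _ _
      _ ≤ t * (1 - t) := by nlinarith
  · calc min (A * (1 - A)) (B * (1 - B)) ≤ B * (1 - B) := min_le_right _ _
      _ ≤ t * (1 - t) := by nlinarith

lemma hasDerivAt_quadbar (β t : ℝ) :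
    HasDerivAt (fun t : ℝ => β * (t * (1 - t))) (β * (1 - 2 * t)) t := by
  have h := ((hasDerivAt_id t).mul ((hasDerivAt_const t 1).sub (hasDerivAt_id t))).const_mul β
  refine h.congr_deriv ?_
  simp only [Pi.sub_apply, id_eq]
  ring

/-- Lower quadratic bound for a KPP nonlinearity. -/
lemma kpp_rho (f : ℝ → ℝ) (hf1 : ContDiff ℝ 1 f) (hf2 : f 0 = 0) (hf3 : f 1 = 0)
    (hf4 : ∀ u : ℝ, 0 < u → u ≠ 1 → (1 - u) * f u > 0)
    (hf5 : 0 < deriv f 0) (hf6 : deriv f 1 < 0) :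
    ∃ ρ : ℝ, 0 < ρ ∧ ∀ u ∈ Icc (0:ℝ) 1, ρ * (u * (1 - u)) ≤ f u := by
  set a := deriv f 0 with ha_def
  set b := -(deriv f 1) with hb_def
  have hb : 0 < b := by rw [hb_def]; linarith
  have hdfc : Continuous (deriv f) := (contDiff_one_iff_deriv.mp hf1).2
  have hfd : Differentiable ℝ f := hf1.differentiable one_ne_zero
  -- near 0
  obtain ⟨η₀, hη₀0, hη₀⟩ := Metric.continuousAt_iff.mp hdfc.continuousAt (a/2) (by linarith)
  set η := min (η₀ / 2) (1/4) with hη_def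
  have hη0 : 0 < η := by positivity
  have hηle : η ≤ 1/4 := min_le_right _ _
  have hnear0 : ∀ u ∈ Icc (0:ℝ) η, a/2 * u ≤ f u := by
    intro u ⟨hu0, huη⟩
    rcases eq_or_lt_of_le hu0 with h | h
    · rw [← h, hf2]; simp
    · obtain ⟨ξ, hξ, hξeq⟩ := exists_deriv_eq_slope f h
        (hf1.continuous.continuousOn) (hfd.differentiableOn)
      have hξδ : dist ξ 0 < η₀ := by
        rw [Real.dist_eq, sub_zero, abs_of_pos hξ.1]
        have : η ≤ η₀ / 2 := min_le_left _ _
        linarith [hξ.2]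
      have h1 := abs_lt.mp ((Real.dist_eq _ _) ▸ hη₀ hξδ)
      have h2 : a / 2 ≤ deriv f ξ := by linarith [h1.1]
      rw [hξeq, hf2, sub_zero, sub_zero] at h2
      calc a/2 * u ≤ (f u / u) * u := mul_le_mul_of_nonneg_right h2 hu0
        _ = f u := by field_simp
  -- near 1
  obtain ⟨η₁, hη₁0, hη₁⟩ := Metric.continuousAt_iff.mp (hdfc.continuousAt (x := 1)) (b/2) (by linarith)
  set η' := min (η₁ / 2) (1/4) with hη'_def
  have hη'0 : 0 < η' := by positivity
  have hη'le : η' ≤ 1/4 := min_le_right _ _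
  have hnear1 : ∀ u ∈ Icc (1 - η') 1, b/2 * (1 - u) ≤ f u := by
    intro u ⟨huη, hu1⟩
    rcases eq_or_lt_of_le hu1 with h | h
    · rw [h, hf3]; simp
    · obtain ⟨ξ, hξ, hξeq⟩ := exists_deriv_eq_slope f h
        (hf1.continuous.continuousOn) (hfd.differentiableOn)
      have hξδ : dist ξ 1 < η₁ := by
        rw [Real.dist_eq, abs_lt]
        have : η' ≤ η₁ / 2 := min_le_left _ _
        constructor <;> nlinarith [hξ.1, hξ.2]
      have h1 := abs_lt.mp ((Real.dist_eq _ _) ▸ hη₁ hξδ)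
      have h2 : deriv f ξ ≤ -(b/2) := by
        rw [hb_def] at *
        linarith [h1.2]
      rw [hξeq, hf3] at h2
      have h3 : (0 - f u) / (1 - u) ≤ -(b/2) := h2
      have h4 : 0 - f u ≤ -(b/2) * (1 - u) := by
        rw [div_le_iff₀ (by linarith)] at h3
        linarith [h3]
      linarith
  -- middle
  have hmain : ∀ u ∈ Icc (0:ℝ) 1, min (a/2) (b/2) * (u * (1-u)) ≤ f u ∨
      (η ≤ u ∧ u ≤ 1 - η') := by
    intro u ⟨hu0, hu1⟩
    rcases le_or_gt u η with h | h
    · left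
      have h1 := hnear0 u ⟨hu0, h⟩
      have h2 : u * (1 - u) ≤ u := by nlinarith
      have hm : min (a/2) (b/2) ≤ a/2 := min_le_left _ _
      nlinarith [mul_nonneg hu0 (by linarith : (0:ℝ) ≤ 1 - u), lt_min (half_pos hf5) (half_pos hb)]
    · rcases le_or_gt u (1 - η') with h' | h'
      · right; exact ⟨h.le, h'⟩
      · left
        have h1 := hnear1 u ⟨h'.le, hu1⟩
        have h2 : u * (1 - u) ≤ 1 - u := by nlinarith
        have hm : min (a/2) (b/2) ≤ b/2 := min_le_right _ _
        nlinarith [mul_nonneg hu0 (by linarith : (0:ℝ) ≤ 1 - u), lt_min (half_pos hf5) (half_pos hb)]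
  rcases le_or_gt (1 - η') η with hcase | hcase
  · -- no middle region
    refine ⟨min (a/2) (b/2), lt_min (half_pos hf5) (half_pos hb), fun u hu => ?_⟩
    rcases hmain u hu with h | ⟨h1, h2⟩
    · exact h
    · linarith
  · -- middle region nonempty
    have hcpt : IsCompact (Icc η (1 - η')) := isCompact_Icc
    obtain ⟨u₀, hu₀mem, hu₀min⟩ := hcpt.exists_isMinOn ⟨η, by constructor <;> linarith⟩
      (hf1.continuous.continuousOn)
    set μ := f u₀ with hμ_def
    have hμ : 0 < μ := by
      have h1 : 0 < u₀ := lt_of_lt_of_le hη0 hu₀mem.1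
      have h2 : u₀ < 1 := by linarith [hu₀mem.2]
      have := hf4 u₀ h1 (ne_of_lt h2)
      nlinarith
    obtain ⟨ρ₂, hρ₂pos, hρ₂1, hρ₂2⟩ : ∃ ρ₂ : ℝ, 0 < ρ₂ ∧ ρ₂ ≤ min (a/2) (b/2) ∧ ρ₂ ≤ 4 * μ :=
      ⟨min (min (a/2) (b/2)) (4 * μ),
        lt_min (lt_min (half_pos hf5) (half_pos hb)) (by linarith),
        min_le_left _ _, min_le_right _ _⟩
    refine ⟨ρ₂, hρ₂pos, fun u hu => ?_⟩
    rcases hmain u hu with h | ⟨h1, h2⟩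
    · nlinarith [mul_nonneg hu.1 (by linarith [hu.2] : (0:ℝ) ≤ 1 - u)]
    · have hfu : μ ≤ f u := isMinOn_iff.mp hu₀min u ⟨h1, h2⟩
      have h3 : u * (1 - u) ≤ 1/4 := by nlinarith [sq_nonneg (u - 1/2)]
      nlinarith [mul_nonneg hu.1 (by linarith [hu.2] : (0:ℝ) ≤ 1 - u)]

/-- Upper linear bound vanishing at 1. -/
lemma kpp_upperlin (f : ℝ → ℝ) (hf1 : ContDiff ℝ 1 f) (hf3 : f 1 = 0) :
    ∃ L₁ : ℝ, 0 ≤ L₁ ∧ ∀ u ∈ Icc (0:ℝ) 1, f u ≤ L₁ * (1 - u) := by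
  have hdfc : Continuous (deriv f) := (contDiff_one_iff_deriv.mp hf1).2
  obtain ⟨ξ₀, hξ₀mem, hξ₀max⟩ := (isCompact_Icc (a := (0:ℝ)) (b := 1)).exists_isMaxOn
    ⟨0, by norm_num⟩ (hdfc.abs.continuousOn)
  refine ⟨|deriv f ξ₀|, abs_nonneg _, fun u ⟨hu0, hu1⟩ => ?_⟩
  rcases eq_or_lt_of_le hu1 with h | h
  · rw [h, hf3]; simp
  · obtain ⟨ξ, hξ, hξeq⟩ := exists_deriv_eq_slope f h
      (hf1.continuous.continuousOn) ((hf1.differentiable one_ne_zero).differentiableOn)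
    have h1 : |deriv f ξ| ≤ |deriv f ξ₀| := isMaxOn_iff.mp hξ₀max ξ ⟨by linarith [hξ.1], by linarith [hξ.2]⟩
    rw [hξeq, hf3] at h1
    have h2 : |0 - f u| / (1 - u) ≤ |deriv f ξ₀| := by
      rw [abs_div] at h1
      rwa [abs_of_pos (by linarith : (0:ℝ) < 1 - u)] at h1
    have h3 : |0 - f u| ≤ |deriv f ξ₀| * (1 - u) := by
      rw [div_le_iff₀ (by linarith)] at h2
      linarith
    have := neg_abs_le (0 - f u)
    have h4 : f u ≤ |0 - f u| := by
      rw [abs_sub_comm]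
      simpa using le_abs_self (f u - 0)
    linarith


lemma exists_P (f : ℝ → ℝ) (c lam β K ρ L₁ Mf : ℝ)
    (hf1 : ContDiff ℝ 1 f)
    (hlam : 0 < lam) (hlamc : lam ≤ c)
    (hβ : 0 < β) (hβlam : β ≤ lam) (hβK : β ≤ K) (hK : 0 < K)
    (hβρ : β * (c + β) ≤ ρ)
    (hKL : L₁ ≤ K * (K + c))
    (hflam : ∀ u ∈ Icc (0:ℝ) 1, f u ≤ (c - lam) * (lam * u))
    (hfL : ∀ u ∈ Icc (0:ℝ) 1, f u ≤ L₁ * (1 - u))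
    (hfρ : ∀ u ∈ Icc (0:ℝ) 1, ρ * (u * (1 - u)) ≤ f u)
    (hMf : ∀ u ∈ Icc (0:ℝ) 1, |f u| ≤ Mf)
    (v₁ u₁ : ℝ) (hv₁ : 0 < v₁) (hvu : v₁ ≤ u₁) (hu₁ : u₁ < 1) :
    ∃ P : ℝ → ℝ, ContinuousOn P (Icc v₁ u₁) ∧ P u₁ = β * (u₁ * (1 - u₁)) ∧
      (∀ t ∈ Ioo v₁ u₁, HasDerivAt P (c - f t / P t) t) ∧
      (∀ t ∈ Icc v₁ u₁, β * (t * (1 - t)) ≤ P t ∧ P t ≤ lam * t ∧ P t ≤ K * (1 - t)) := by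
  have hc : 0 < c := lt_of_lt_of_le hlam hlamc
  have hMf0 : 0 ≤ Mf := le_trans (abs_nonneg _) (hMf 0 ⟨le_rfl, by norm_num⟩)
  have hsub : Icc v₁ u₁ ⊆ Icc (0:ℝ) 1 := Icc_subset_Icc hv₁.le hu₁.le
  have hlin : ∀ (k x : ℝ), HasDerivAt (fun y => k * y) k x := fun k x => by
    simpa using (hasDerivAt_id x).const_mul k
  have hlinK : ∀ (x : ℝ), HasDerivAt (fun y : ℝ => K * (1 - y)) (-K) x := by
    intro x
    have := ((hasDerivAt_const x (1:ℝ)).sub (hasDerivAt_id' (x := x))).const_mul K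
    exact this.congr_deriv (by ring)
  set m : ℝ := min (β * (v₁ * (1 - v₁))) (β * (u₁ * (1 - u₁))) / 2 with hm_def
  have hm : 0 < m := by
    have h1 : 0 < β * (v₁ * (1 - v₁)) := by
      apply mul_pos hβ (mul_pos hv₁ (by linarith))
    have h2 : 0 < β * (u₁ * (1 - u₁)) := by
      apply mul_pos hβ (mul_pos (lt_of_lt_of_le hv₁ hvu) (by linarith))
    rw [hm_def]
    have := lt_min h1 h2
    linarith
  have hell2m : ∀ t ∈ Icc v₁ u₁, 2 * m ≤ β * (t * (1 - t)) := by
    intro t ht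
    have h1 : min (v₁ * (1 - v₁)) (u₁ * (1 - u₁)) ≤ t * (1 - t) := quad_min ht.1 ht.2
    have h2 : β * min (v₁ * (1 - v₁)) (u₁ * (1 - u₁))
        = min (β * (v₁ * (1 - v₁))) (β * (u₁ * (1 - u₁))) := by
      rw [mul_min_of_nonneg _ _ hβ.le]
    rw [hm_def]
    have h3 : β * min (v₁ * (1 - v₁)) (u₁ * (1 - u₁)) ≤ β * (t * (1 - t)) :=
      mul_le_mul_of_nonneg_left h1 hβ.le
    rw [h2] at h3
    linarith
  -- the Picard-Lindelöf setup
  set C : ℝ := |c| + Mf / m with hC_def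
  have hC0 : 0 ≤ C := by positivity
  set R : ℝ := C * (u₁ - v₁) + 1 with hR_def
  have hR0 : 0 ≤ R := by
    have : 0 ≤ C * (u₁ - v₁) := mul_nonneg hC0 (by linarith)
    linarith
  set V : ℝ → ℝ → ℝ := fun t x => c - f t / max x m with hV_def
  have hVlip : ∀ t ∈ Icc v₁ u₁,
      LipschitzOnWith (Real.toNNReal (Mf / m ^ 2)) (V t) (Metric.closedBall (β * (u₁ * (1 - u₁))) R) := by
    intro t ht
    rw [lipschitzOnWith_iff_dist_le_mul]
    intro x _ y _
    have hxm : (0:ℝ) < max x m := lt_of_lt_of_le hm (le_max_right _ _)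
    have hym : (0:ℝ) < max y m := lt_of_lt_of_le hm (le_max_right _ _)
    have h1 : dist (V t x) (V t y) = |f t| * |1 / max y m - 1 / max x m| := by
      rw [Real.dist_eq, hV_def]
      simp only
      rw [← abs_mul]
      congr 1
      field_simp
      ring
    have h2 : |1 / max y m - 1 / max x m| ≤ |x - y| / m ^ 2 := by
      have e1 : 1 / max y m - 1 / max x m = (max x m - max y m) / (max y m * max x m) := by
        field_simp
      rw [e1, abs_div]
      have e2 : |max x m - max y m| ≤ |x - y| := abs_max_sub_max_le_abs _ _ _
      have e3 : m ^ 2 ≤ |max y m * max x m| := by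
        rw [abs_of_pos (mul_pos hym hxm)]
        have := mul_le_mul (le_max_right y m) (le_max_right x m) hm.le hym.le
        nlinarith
      exact div_le_div₀ (by positivity) e2 (by positivity) e3
    calc dist (V t x) (V t y) ≤ Mf * (|x - y| / m ^ 2) := by
          rw [h1]
          exact mul_le_mul (hMf t (hsub ht)) h2 (abs_nonneg _) hMf0
      _ = (Real.toNNReal (Mf / m ^ 2)) * dist x y := by
          rw [Real.coe_toNNReal _ (by positivity), Real.dist_eq]
          ring
  have hpl : IsPicardLindelof V (tmin := v₁) (tmax := u₁) ⟨u₁, hvu, le_rfl⟩ (β * (u₁ * (1 - u₁)))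
      (Real.toNNReal R) 0 (Real.toNNReal C) (Real.toNNReal (Mf / m ^ 2)) :=
    { lipschitzOnWith := by rw [Real.coe_toNNReal _ hR0]; exact hVlip
      continuousOn := fun x _ => by
        apply ContinuousOn.sub continuousOn_const
        apply ContinuousOn.div (hf1.continuous.continuousOn) continuousOn_const
        intro t _
        exact ne_of_gt (lt_of_lt_of_le hm (le_max_right _ _))
      norm_le := by
        intro t ht x _
        rw [Real.coe_toNNReal _ hC0]
        have hxm : (0:ℝ) < max x m := lt_of_lt_of_le hm (le_max_right _ _)
        rw [hV_def]
        simp only [Real.norm_eq_abs]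
        calc |c - f t / max x m| ≤ |c| + |f t / max x m| := by
              rw [sub_eq_add_neg]
              refine (abs_add_le _ _).trans ?_
              rw [abs_neg]
            _ ≤ |c| + Mf / m := by
              rw [abs_div, abs_of_pos hxm]
              have h1 : |f t| ≤ Mf := hMf t (hsub ht)
              have h2 : |f t| / max x m ≤ Mf / m :=
                div_le_div₀ hMf0 h1 hm (le_max_right _ _)
              linarith
      mul_max_le := by
        simp only [NNReal.coe_zero, sub_zero, Real.coe_toNNReal _ hC0, Real.coe_toNNReal _ hR0]
        have : max (u₁ - u₁) (u₁ - v₁) = u₁ - v₁ := by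
          rw [max_eq_right]; linarith
        rw [this, hR_def]
        linarith }
  obtain ⟨P, hPanchor, hPderiv⟩ := hpl.exists_eq_forall_mem_Icc_hasDerivWithinAt₀
  replace hPanchor : P u₁ = β * (u₁ * (1 - u₁)) := hPanchor
  have hPc : ContinuousOn P (Icc v₁ u₁) := fun t ht => (hPderiv t ht).continuousWithinAt
  have hPd : ∀ t ∈ Ioo v₁ u₁, HasDerivAt P (V t (P t)) t := fun t ht =>
    (hPderiv t (Ioo_subset_Icc_self ht)).hasDerivAt (Icc_mem_nhds ht.1 ht.2)
  have hfpos : ∀ t ∈ Icc v₁ u₁, 0 ≤ f t := by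
    intro t ht
    have h1 := hfρ t (hsub ht)
    have hρ : 0 < ρ := lt_of_lt_of_le (by positivity) hβρ
    have ht01 := hsub ht
    have h2 : (0:ℝ) ≤ ρ * (t * (1 - t)) :=
      mul_nonneg hρ.le (mul_nonneg ht01.1 (by linarith [ht01.2]))
    linarith
  have hellc : Continuous (fun t : ℝ => β * (t * (1 - t))) :=
    continuous_const.mul (continuous_id.mul (continuous_const.sub continuous_id))
  have hPmaxc : ContinuousOn (fun t => max (P t) m) (Icc v₁ u₁) := by
    intro x hx
    exact (hPc x hx).max continuousWithinAt_const
  -- Barrier 1 : P ≤ lam * t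
  have hbar1 : ∀ t ∈ Icc v₁ u₁, P t ≤ lam * t := by
    have key := gronwall_nonneg_left (h := fun t => lam * t - P t)
      (dh := fun t => lam - V t (P t))
      (g := fun t => f t / (max (P t) m * (lam * t))) hvu
      ?_ ?_ ?_ ?_ ?_
    · intro t ht
      have h5 : (0:ℝ) ≤ lam * t - P t := key t ht
      linarith
    · -- g continuous
      apply ContinuousOn.div (hf1.continuous.continuousOn)
      · exact (hPmaxc.mul (continuousOn_const.mul continuousOn_id))
      · intro t ht
        have h1 : (0:ℝ) < max (P t) m := lt_of_lt_of_le hm (le_max_right _ _)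
        have h2 : (0:ℝ) < lam * t := mul_pos hlam (lt_of_lt_of_le hv₁ ht.1)
        positivity
    · exact (continuousOn_const.mul continuousOn_id).sub hPc
    · intro t ht
      exact (hlin lam t).sub (hPd t ht)
    · intro t ht
      have htI : t ∈ Icc v₁ u₁ := Ioo_subset_Icc_self ht
      have hMpos : (0:ℝ) < max (P t) m := lt_of_lt_of_le hm (le_max_right _ _)
      have hLpos : (0:ℝ) < lam * t := mul_pos hlam (lt_of_lt_of_le hv₁ htI.1)
      have hfle : f t ≤ (c - lam) * (lam * t) := hflam t (hsub htI)
      have hft : 0 ≤ f t := hfpos t htI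
      have hPM : P t ≤ max (P t) m := le_max_left _ _
      have e2 : lam - c + f t / (lam * t) ≤ 0 := by
        have := (div_le_iff₀ hLpos).2 hfle
        linarith [this]
      have e1 : lam - (c - f t / max (P t) m)
          = (lam - c + f t / (lam * t)) + f t * ((lam * t) - max (P t) m) / (max (P t) m * (lam * t)) := by
        have ht0 : t ≠ 0 := (lt_of_lt_of_le hv₁ htI.1).ne'
        field_simp
        ring
      have e3 : f t * ((lam * t) - max (P t) m) ≤ f t * ((lam * t) - P t) :=
        mul_le_mul_of_nonneg_left (by linarith) hft
      have e4 : f t * ((lam * t) - max (P t) m) / (max (P t) m * (lam * t))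
          ≤ f t * ((lam * t) - P t) / (max (P t) m * (lam * t)) := by
        gcongr
      show lam - (c - f t / max (P t) m)
          ≤ f t / (max (P t) m * (lam * t)) * (lam * t - P t)
      rw [div_mul_eq_mul_div]
      linarith [e1, e2, e4]
    · show 0 ≤ lam * u₁ - P u₁
      rw [hPanchor]
      have hu₁0 : 0 < u₁ := lt_of_lt_of_le hv₁ hvu
      nlinarith [mul_nonneg (mul_nonneg hβ.le hu₁0.le) hu₁0.le,
        mul_le_mul_of_nonneg_right hβlam hu₁0.le]
  -- Barrier 2 : P ≤ K * (1 - t)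
  have hbar2 : ∀ t ∈ Icc v₁ u₁, P t ≤ K * (1 - t) := by
    have key := gronwall_nonneg_left (h := fun t => K * (1 - t) - P t)
      (dh := fun t => -K - V t (P t))
      (g := fun t => f t / (max (P t) m * (K * (1 - t)))) hvu
      ?_ ?_ ?_ ?_ ?_
    · intro t ht
      have h5 : (0:ℝ) ≤ K * (1 - t) - P t := key t ht
      linarith
    · apply ContinuousOn.div (hf1.continuous.continuousOn)
      · exact (hPmaxc.mul
          (continuousOn_const.mul (continuousOn_const.sub continuousOn_id)))
      · intro t ht
        have h1 : (0:ℝ) < max (P t) m := lt_of_lt_of_le hm (le_max_right _ _)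
        have h2 : (0:ℝ) < K * (1 - t) := mul_pos hK (by linarith [lt_of_le_of_lt ht.2 hu₁])
        positivity
    · exact (continuousOn_const.mul (continuousOn_const.sub continuousOn_id)).sub hPc
    · intro t ht
      exact (hlinK t).sub (hPd t ht)
    · intro t ht
      have htI : t ∈ Icc v₁ u₁ := Ioo_subset_Icc_self ht
      have hMpos : (0:ℝ) < max (P t) m := lt_of_lt_of_le hm (le_max_right _ _)
      have hLpos : (0:ℝ) < K * (1 - t) := mul_pos hK (by linarith [lt_of_le_of_lt htI.2 hu₁])
      have hft : 0 ≤ f t := hfpos t htI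
      have hPM : P t ≤ max (P t) m := le_max_left _ _
      have ht01 := hsub htI
      have hfle : f t ≤ (K + c) * (K * (1 - t)) := by
        have h1 := hfL t ht01
        nlinarith [ht01.2, hK, hc]
      have e2 : -K - c + f t / (K * (1 - t)) ≤ 0 := by
        have := (div_le_iff₀ hLpos).2 hfle
        linarith [this]
      have e1 : -K - (c - f t / max (P t) m)
          = (-K - c + f t / (K * (1 - t)))
            + f t * ((K * (1 - t)) - max (P t) m) / (max (P t) m * (K * (1 - t))) := by
        have ht1 : 1 - t ≠ 0 := (show (0:ℝ) < 1 - t by linarith [lt_of_le_of_lt htI.2 hu₁]).ne'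
        field_simp
        ring
      have e3 : f t * ((K * (1 - t)) - max (P t) m) ≤ f t * ((K * (1 - t)) - P t) :=
        mul_le_mul_of_nonneg_left (by linarith) hft
      have e4 : f t * ((K * (1 - t)) - max (P t) m) / (max (P t) m * (K * (1 - t)))
          ≤ f t * ((K * (1 - t)) - P t) / (max (P t) m * (K * (1 - t))) := by
        gcongr
      show -K - (c - f t / max (P t) m)
          ≤ f t / (max (P t) m * (K * (1 - t))) * (K * (1 - t) - P t)
      rw [div_mul_eq_mul_div]
      linarith [e1, e2, e4]
    · show 0 ≤ K * (1 - u₁) - P u₁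
      rw [hPanchor]
      have hu₁0 : 0 < u₁ := lt_of_lt_of_le hv₁ hvu
      have h6 : β * u₁ ≤ K := by
        have : β * u₁ ≤ β * 1 := mul_le_mul_of_nonneg_left hu₁.le hβ.le
        linarith
      nlinarith [mul_nonneg (sub_nonneg.2 h6) (by linarith : (0:ℝ) ≤ 1 - u₁)]
  -- Barrier 3 : lower bound, via a first-exit argument
  have hbar3 : ∀ t ∈ Icc v₁ u₁, β * (t * (1 - t)) ≤ P t := by
    by_contra hcon
    push_neg at hcon
    obtain ⟨t', ht'mem, ht'⟩ := hcon
    set E : Set ℝ := {t : ℝ | t ∈ Icc v₁ u₁ ∧ P t < β * (t * (1 - t))} with hE_def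
    have hEne : E.Nonempty := ⟨t', ht'mem, ht'⟩
    have hEbdd : BddAbove E := ⟨u₁, fun e he => he.1.2⟩
    set t₂ := sSup E with ht₂_def
    have ht₂mem : t₂ ∈ Icc v₁ u₁ :=
      ⟨le_trans ht'mem.1 (le_csSup hEbdd ⟨ht'mem, ht'⟩),
       csSup_le hEne (fun e he => he.1.2)⟩
    have hgood : ∀ t, t₂ < t → t ≤ u₁ → β * (t * (1 - t)) ≤ P t := by
      intro t ht1 ht2
      by_contra h
      push_neg at h
      have htE : t ∈ E := ⟨⟨le_trans ht₂mem.1 ht1.le, ht2⟩, h⟩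
      exact absurd (le_csSup hEbdd htE) (not_le.2 ht1)
    have ht₂P : β * (t₂ * (1 - t₂)) ≤ P t₂ := by
      rcases eq_or_lt_of_le ht₂mem.2 with heq | hlt
      · rw [heq, hPanchor]
      · by_contra hneg
        push_neg at hneg
        have hcw : ContinuousWithinAt (fun t => P t - β * (t * (1 - t))) (Ioc t₂ u₁) t₂ := by
          apply ContinuousWithinAt.mono
            ((hPc.sub hellc.continuousOn).continuousWithinAt ht₂mem)
          exact fun x hx => ⟨le_trans ht₂mem.1 hx.1.le, hx.2⟩
        have hne : (𝓝[Ioc t₂ u₁] t₂).NeBot := by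
          apply mem_closure_iff_nhdsWithin_neBot.mp
          rw [closure_Ioc (ne_of_lt hlt)]
          exact ⟨le_rfl, hlt.le⟩
        have hlt0 : P t₂ - β * (t₂ * (1 - t₂)) < 0 := by linarith
        have hev : ∀ᶠ t in 𝓝[Ioc t₂ u₁] t₂, P t - β * (t * (1 - t)) < 0 :=
          hcw.eventually (eventually_lt_nhds hlt0)
        obtain ⟨t₃, ht₃1, ht₃2⟩ := (hev.and eventually_mem_nhdsWithin).exists
        have : t₃ ∈ E := ⟨⟨le_trans ht₂mem.1 ht₃2.1.le, ht₃2.2⟩, by linarith⟩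
        exact absurd (le_csSup hEbdd this) (not_le.2 ht₃2.1)
    have hPt₂ : m < P t₂ := by
      have := hell2m t₂ ht₂mem
      linarith
    have hevP : ∀ᶠ t in 𝓝[Icc v₁ u₁] t₂, m < P t :=
      (hPc.continuousWithinAt ht₂mem).eventually (eventually_gt_nhds hPt₂)
    obtain ⟨δ, hδ0, hδ⟩ := Metric.mem_nhdsWithin_iff.mp hevP
    set w := max v₁ (t₂ - δ/2) with hw_def
    have hwv : v₁ ≤ w := le_max_left _ _
    have hwu : w ≤ u₁ := max_le hvu (by linarith [ht₂mem.2])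
    have hww : ∀ t ∈ Icc w u₁, m < P t := by
      intro t ht
      rcases le_or_gt t t₂ with h | h
      · apply hδ
        constructor
        · rw [Metric.mem_ball, Real.dist_eq, abs_lt]
          have : t₂ - δ/2 ≤ w := le_max_right _ _
          constructor <;> linarith [ht.1]
        · exact ⟨le_trans hwv ht.1, ht.2⟩
      · have h1 := hgood t h ht.2
        have h2 := hell2m t ⟨le_trans hwv ht.1, ht.2⟩
        linarith
    have hg3 := gronwall_nonneg_left (h := fun t => P t - β * (t * (1 - t)))
      (dh := fun t => V t (P t) - β * (1 - 2 * t))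
      (g := fun t => f t / ((β * (t * (1 - t))) * P t)) hwu
      ?_ ?_ ?_ ?_ ?_
    · rcases max_cases v₁ (t₂ - δ/2) with ⟨hweq, hc1⟩ | ⟨hweq, hc1⟩
      · have h5 : (0:ℝ) ≤ P t' - β * (t' * (1 - t')) := by
          apply hg3 t'
          rw [hw_def, hweq]
          exact ht'mem
        linarith
      · obtain ⟨e, heE, hegt⟩ := exists_lt_of_lt_csSup hEne (show w < t₂ by rw [hw_def, hweq]; linarith)
        have h5 : (0:ℝ) ≤ P e - β * (e * (1 - e)) := hg3 e ⟨hegt.le, heE.1.2⟩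
        linarith [heE.2]
    · apply ContinuousOn.div (hf1.continuous.continuousOn.mono
        (fun x hx => hsub ⟨le_trans hwv hx.1, hx.2⟩))
      · exact hellc.continuousOn.mul
          (hPc.mono (fun x hx => ⟨le_trans hwv hx.1, hx.2⟩))
      · intro t ht
        have h1 : (0:ℝ) < β * (t * (1 - t)) := by
          have := hell2m t ⟨le_trans hwv ht.1, ht.2⟩
          linarith
        have h2 : (0:ℝ) < P t := lt_trans hm (hww t ht)
        positivity
    · exact (hPc.mono (fun x hx => ⟨le_trans hwv hx.1, hx.2⟩)).sub
        hellc.continuousOn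
    · intro t ht
      have htI : t ∈ Ioo v₁ u₁ := ⟨lt_of_le_of_lt hwv ht.1, ht.2⟩
      exact (hPd t htI).sub (hasDerivAt_quadbar β t)
    · intro t ht
      have htI : t ∈ Icc w u₁ := Ioo_subset_Icc_self ht
      have htI' : t ∈ Icc v₁ u₁ := ⟨le_trans hwv htI.1, htI.2⟩
      have ht01 := hsub htI'
      have hPm : m < P t := hww t htI
      have hPt : 0 < P t := lt_trans hm hPm
      have hmaxP : max (P t) m = P t := max_eq_left hPm.le
      have hellpos : (0:ℝ) < β * (t * (1 - t)) := by
        have := hell2m t htI'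
        linarith
      have hft : 0 ≤ f t := hfpos t htI'
      have hρf := hfρ t ht01
      have e2 : c - β * (1 - 2 * t) - f t / (β * (t * (1 - t))) ≤ 0 := by
        have h1 : (c - β * (1 - 2 * t)) * (β * (t * (1 - t))) ≤ f t := by
          have h2 : β * (c + β) * (t * (1 - t)) ≤ ρ * (t * (1 - t)) := by
            apply mul_le_mul_of_nonneg_right hβρ
            nlinarith [ht01.1, ht01.2]
          nlinarith [ht01.1, ht01.2, hβ]
        have := (le_div_iff₀ hellpos).2 h1
        linarith
      have e1 : (c - f t / max (P t) m) - β * (1 - 2 * t)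
          = (c - β * (1 - 2 * t) - f t / (β * (t * (1 - t))))
            + f t * (P t - β * (t * (1 - t))) / ((β * (t * (1 - t))) * P t) := by
        rw [hmaxP]
        have ht0 : t ≠ 0 := (lt_of_lt_of_le hv₁ htI'.1).ne'
        have ht1 : 1 - t ≠ 0 := (show (0:ℝ) < 1 - t by linarith [lt_of_le_of_lt htI'.2 hu₁]).ne'
        field_simp
        ring
      show (c - f t / max (P t) m) - β * (1 - 2 * t)
          ≤ f t / ((β * (t * (1 - t))) * P t) * (P t - β * (t * (1 - t)))
      rw [div_mul_eq_mul_div]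
      linarith [e1, e2]
    · show 0 ≤ P u₁ - β * (u₁ * (1 - u₁))
      rw [hPanchor]
      linarith
  refine ⟨P, hPc, hPanchor, ?_, fun t ht => ⟨hbar3 t ht, hbar1 t ht, hbar2 t ht⟩⟩
  intro t ht
  have h1 := hPd t ht
  have htI := Ioo_subset_Icc_self ht
  have h2 : max (P t) m = P t := by
    apply max_eq_left
    have := hell2m t htI
    linarith [hbar3 t htI]
  have h3 : V t (P t) = c - f t / P t := by
    simp only [hV_def]
    rw [h2]
  rwa [h3] at h1


lemma kpp_no_wave (f : ℝ → ℝ) (hf : KPP f) (c : ℝ) (hc : c < c0 f)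
    (q : ℝ → ℝ) (hq : IsKPPWave f c q) : False := by
  obtain ⟨hf1, hf2, hf3, hf4, hf5, hf6, hf7⟩ := hf
  obtain ⟨hq1, hq2, hq3, hq4, hq5, hq6⟩ := hq
  set a := deriv f 0 with ha_def
  have ha : 0 < a := hf5
  -- regularity of q
  have hqd : Differentiable ℝ q := hq1.differentiable (by norm_num)
  have hq1' : ContDiff ℝ 1 (deriv q) := by
    have h2 : ContDiff ℝ ((1 : WithTop ℕ∞) + 1) q := by
      have he : ((1 : WithTop ℕ∞) + 1) = 2 := by norm_num
      rw [he]; exact hq1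
    exact (contDiff_succ_iff_deriv.mp h2).2.2
  have hlin : ∀ (k x : ℝ), HasDerivAt (fun y => k * y) k x := fun k x => by
    simpa using (hasDerivAt_id x).const_mul k
  have hqdd : Differentiable ℝ (deriv q) := hq1'.differentiable one_ne_zero
  have hqddc : Continuous (deriv (deriv q)) := (contDiff_one_iff_deriv.mp hq1').2
  have hsm : StrictMono q := strictMono_of_deriv_pos hq6
  -- 0 < q < 1
  have hge0 : ∀ z, 0 ≤ q z := by
    by_contra hcon
    push_neg at hcon
    obtain ⟨z₀, h0⟩ := hcon
    have h1 : ∀ᶠ z in atBot, q z₀ < q z := hq3.eventually (eventually_gt_nhds h0)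
    obtain ⟨z, hz1, hz2⟩ := (h1.and (eventually_le_atBot z₀)).exists
    exact absurd (hsm.monotone hz2) (not_le.2 hz1)
  have hle1 : ∀ z, q z ≤ 1 := by
    by_contra hcon
    push_neg at hcon
    obtain ⟨z₀, h0⟩ := hcon
    have h1 : ∀ᶠ z in atTop, q z < q z₀ := hq4.eventually (eventually_lt_nhds h0)
    obtain ⟨z, hz1, hz2⟩ := (h1.and (eventually_ge_atTop z₀)).exists
    exact absurd (hsm.monotone hz2) (not_le.2 hz1)
  have hpos : ∀ z, 0 < q z := fun z => lt_of_le_of_lt (hge0 (z - 1)) (hsm (by linarith))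
  have hlt1 : ∀ z, q z < 1 := fun z => lt_of_lt_of_le (hsm (show z < z + 1 by linarith)) (hle1 (z + 1))
  have hfq_pos : ∀ z, 0 < f (q z) := by
    intro z
    have h4 := hf4 (q z) (hpos z) (ne_of_lt (hlt1 z))
    nlinarith [hlt1 z]
  have hode : ∀ z, deriv (deriv q) z = c * deriv q z - f (q z) := by
    intro z
    linarith [hq2 z]
  rcases le_or_gt c 0 with hc0 | hc0
  · -- concavity case
    have hdd_neg : ∀ z, deriv (deriv q) z < 0 := by
      intro z
      have h1 : c * deriv q z ≤ 0 := mul_nonpos_iff.2 (Or.inr ⟨hc0, (hq6 z).le⟩)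
      rw [hode z]; linarith [hfq_pos z]
    have hanti : StrictAnti (deriv q) := strictAnti_of_deriv_neg hdd_neg
    set d := deriv q 0 with hd_def
    have hd : 0 < d := hq6 0
    set r : ℝ → ℝ := fun z => q z - d * z with hr_def
    have hrd : ∀ z, HasDerivAt r (deriv q z - d) z := by
      intro z
      exact ((hqd z).hasDerivAt).sub (hlin d z)
    have hrmono : MonotoneOn r (Iic 0) := by
      apply monotoneOn_of_deriv_nonneg (convex_Iic 0)
      · exact (Continuous.sub hqd.continuous (continuous_const.mul continuous_id)).continuousOn
      · intro z hz
        exact (hrd z).differentiableAt.differentiableWithinAt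
      · intro z hz
        rw [interior_Iic] at hz
        rw [(hrd z).deriv]
        have : d < deriv q z := hanti hz
        linarith
    set z : ℝ := -(q 0 + 1) / d with hz_def
    have hzneg : z < 0 := by
      apply div_neg_of_neg_of_pos _ hd
      linarith [hpos 0]
    have := hrmono (mem_Iic.2 hzneg.le) (mem_Iic.2 le_rfl) hzneg.le
    have hdz : d * z = -(q 0 + 1) := by
      rw [hz_def, mul_div_cancel₀ _ (ne_of_gt hd)]
    simp only [hr_def] at this
    have : q z ≤ q 0 + d * z := by linarith
    rw [hdz] at this
    linarith [hpos z]
  · -- oscillation case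
    have hc2 : c ^ 2 < 4 * a := by
      have h4a : (2 * Real.sqrt a) ^ 2 = 4 * a := by
        rw [mul_pow, Real.sq_sqrt ha.le]; norm_num
      have hcc : c < 2 * Real.sqrt a := hc
      nlinarith
    set ε := (a - c ^ 2 / 4) / 2 with hε_def
    have hε : 0 < ε := by rw [hε_def]; linarith
    have hdfc : Continuous (deriv f) := (contDiff_one_iff_deriv.mp hf1).2
    obtain ⟨δ, hδ0, hδ⟩ := Metric.continuousAt_iff.mp hdfc.continuousAt ε hε
    have hfl : ∀ u : ℝ, 0 ≤ u → u < δ → (a - ε) * u ≤ f u := by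
      intro u hu0 huδ
      rcases eq_or_lt_of_le hu0 with h | h
      · rw [← h, hf2]; simp
      · obtain ⟨ξ, hξ, hξeq⟩ := exists_deriv_eq_slope f h
          (hf1.continuous.continuousOn) ((hf1.differentiable one_ne_zero).differentiableOn)
        have hξδ : dist ξ 0 < δ := by
          rw [Real.dist_eq, sub_zero, abs_of_pos hξ.1]
          linarith [hξ.2]
        have := hδ hξδ
        rw [Real.dist_eq] at this
        have h1 : a - ε ≤ deriv f ξ := by
          have := abs_lt.mp this
          linarith [this.1]
        rw [hξeq, hf2, sub_zero, sub_zero] at h1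
        calc (a - ε) * u ≤ (f u / u) * u := by
              apply mul_le_mul_of_nonneg_right h1 hu0
          _ = f u := by field_simp
    obtain ⟨z₀, hz₀⟩ : ∃ z₀ : ℝ, ∀ z ≤ z₀, q z < δ := by
      have h1 : ∀ᶠ z in atBot, q z < δ := hq3.eventually (eventually_lt_nhds hδ0)
      exact eventually_atBot.mp h1
    set e : ℝ → ℝ := fun z => Real.exp (-(c / 2) * z) with he_def
    have hepos : ∀ z, 0 < e z := fun z => Real.exp_pos _
    have hed : ∀ z : ℝ, HasDerivAt e (e z * (-(c / 2))) z := by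
      intro z
      simp only [he_def]
      simpa using ((hasDerivAt_id z).const_mul (-(c / 2))).exp
    set w : ℝ → ℝ := fun z => q z * e z with hw_def
    set W1 : ℝ → ℝ := fun z => (deriv q z - c / 2 * q z) * e z with hW1_def
    have hwd : ∀ z, HasDerivAt w (W1 z) z := by
      intro z
      have := ((hqd z).hasDerivAt).mul (hed z)
      refine this.congr_deriv ?_
      simp only [hW1_def]
      ring
    set W2 : ℝ → ℝ := fun z => (deriv (deriv q) z - c * deriv q z + c ^ 2 / 4 * q z) * e z
      with hW2_def
    have hW1d : ∀ z, HasDerivAt W1 (W2 z) z := by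
      intro z
      have h1 : HasDerivAt (fun z => deriv q z - c / 2 * q z)
          (deriv (deriv q) z - c / 2 * deriv q z) z :=
        ((hqdd z).hasDerivAt).sub (((hqd z).hasDerivAt).const_mul (c / 2))
      have := h1.mul (hed z)
      refine this.congr_deriv ?_
      simp only [hW2_def]
      ring
    have hwpos : ∀ z, 0 < w z := fun z => mul_pos (hpos z) (hepos z)
    have hkey : ∀ z ≤ z₀, W2 z ≤ -ε * w z := by
      intro z hz
      have h1 : deriv (deriv q) z - c * deriv q z = -f (q z) := by linarith [hq2 z]
      have h2 : (a - ε) * q z ≤ f (q z) := hfl (q z) (hge0 z) (hz₀ z hz)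
      have h3 : a - ε - c ^ 2 / 4 = ε := by rw [hε_def]; ring
      have h3' : a - ε = c ^ 2 / 4 + ε := by linarith
      have h5 : (a - ε) * q z = c ^ 2 / 4 * q z + ε * q z := by rw [h3']; ring
      have h4 : deriv (deriv q) z - c * deriv q z + c ^ 2 / 4 * q z ≤ -ε * q z := by
        rw [h1]; linarith
      calc W2 z ≤ (-ε * q z) * e z := by
            exact mul_le_mul_of_nonneg_right h4 (hepos z).le
        _ = -ε * w z := by rw [hw_def]; ring
    have hW1cont : Continuous W1 := by
      apply Continuous.mul
      · exact (hq1'.continuous).sub (continuous_const.mul hqd.continuous)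
      · exact (continuous_const.mul continuous_id).rexp
    have hW1anti : AntitoneOn W1 (Iic z₀) := by
      apply antitoneOn_of_deriv_nonpos (convex_Iic z₀)
      · exact hW1cont.continuousOn
      · intro x hx
        exact (hW1d x).differentiableAt.differentiableWithinAt
      · intro x hx
        rw [interior_Iic] at hx
        rw [(hW1d x).deriv]
        have := hkey x hx.le
        nlinarith [hwpos x]
    have hStepA : ∀ z ≤ z₀, W1 z ≤ 0 := by
      by_contra hcon
      push_neg at hcon
      obtain ⟨z₁, hz₁le, hz₁pos⟩ := hcon
      set φ : ℝ → ℝ := fun z => w z - W1 z₁ * z with hφ_def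
      have hφmono : MonotoneOn φ (Iic z₁) := by
        apply monotoneOn_of_deriv_nonneg (convex_Iic z₁)
        · exact ((hqd.continuous.mul (continuous_const.mul continuous_id).rexp).sub
            (continuous_const.mul continuous_id)).continuousOn
        · intro x hx
          exact ((hwd x).sub (hlin (W1 z₁) x)).differentiableAt.differentiableWithinAt
        · intro x hx
          rw [interior_Iic] at hx
          rw [HasDerivAt.deriv (f := φ) ((hwd x).sub (hlin (W1 z₁) x))]
          have : W1 z₁ ≤ W1 x := hW1anti (mem_Iic.2 (hx.le.trans hz₁le)) (mem_Iic.2 hz₁le) hx.le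
          linarith
      set z := z₁ - (w z₁ + 1) / W1 z₁ with hz_def
      have hzle : z ≤ z₁ := by
        rw [hz_def]
        have : 0 < (w z₁ + 1) / W1 z₁ := div_pos (by linarith [hwpos z₁]) hz₁pos
        linarith
      have := hφmono (mem_Iic.2 hzle) (mem_Iic.2 le_rfl) hzle
      simp only [hφ_def] at this
      have hcalc : W1 z₁ * z = W1 z₁ * z₁ - (w z₁ + 1) := by
        rw [hz_def, mul_sub, mul_div_cancel₀ _ (ne_of_gt hz₁pos)]
      nlinarith [hwpos z]
    -- Step B
    set m := w z₀ with hm_def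
    have hm : 0 < m := hwpos z₀
    have hwanti : AntitoneOn w (Iic z₀) := by
      apply antitoneOn_of_deriv_nonpos (convex_Iic z₀)
      · exact (hqd.continuous.mul (continuous_const.mul continuous_id).rexp).continuousOn
      · intro x hx
        exact (hwd x).differentiableAt.differentiableWithinAt
      · intro x hx
        rw [interior_Iic] at hx
        rw [(hwd x).deriv]
        exact hStepA x hx.le
    set ψ : ℝ → ℝ := fun z => W1 z + ε * m * z with hψ_def
    have hψanti : AntitoneOn ψ (Iic z₀) := by
      apply antitoneOn_of_deriv_nonpos (convex_Iic z₀)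
      · exact (hW1cont.add (continuous_const.mul continuous_id)).continuousOn
      · intro x hx
        exact ((hW1d x).add (hlin (ε * m) x)).differentiableAt.differentiableWithinAt
      · intro x hx
        rw [interior_Iic] at hx
        rw [HasDerivAt.deriv (f := ψ) ((hW1d x).add (hlin (ε * m) x))]
        have h1 := hkey x hx.le
        have h2 : m ≤ w x := hwanti (mem_Iic.2 hx.le) (mem_Iic.2 le_rfl) hx.le
        nlinarith
    set z := z₀ - (|W1 z₀| + 1) / (ε * m) with hz_def
    have hεm : 0 < ε * m := mul_pos hε hm
    have hzle : z ≤ z₀ := by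
      rw [hz_def]
      have : 0 < (|W1 z₀| + 1) / (ε * m) := div_pos (by positivity) hεm
      linarith
    have := hψanti (mem_Iic.2 hzle) (mem_Iic.2 le_rfl) hzle
    simp only [hψ_def] at this
    have hcalc : ε * m * z = ε * m * z₀ - (|W1 z₀| + 1) := by
      rw [hz_def, mul_sub, mul_div_cancel₀ _ (ne_of_gt hεm)]
    have hW1z : 1 ≤ W1 z := by
      have habs : -|W1 z₀| ≤ W1 z₀ := neg_abs_le _
      nlinarith
    linarith [hStepA z hzle]


lemma kpp_exists_wave (f : ℝ → ℝ) (hf : KPP f) (c : ℝ) (hc : c0 f ≤ c) :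
    ∃ q : ℝ → ℝ, IsKPPWave f c q := by
  obtain ⟨hf1, hf2, hf3, hf4, hf5, hf6, hf7⟩ := hf
  set a := deriv f 0 with ha_def
  have ha : 0 < a := hf5
  have hsqa : Real.sqrt a ^ 2 = a := Real.sq_sqrt ha.le
  have hsqa0 : 0 < Real.sqrt a := Real.sqrt_pos.2 ha
  have hc' : 2 * Real.sqrt a ≤ c := hc
  have hcpos : 0 < c := lt_of_lt_of_le (mul_pos two_pos hsqa0) hc'
  have hdisc : 0 ≤ c ^ 2 - 4 * a := by
    nlinarith [Real.sqrt_nonneg a, hc']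
  set s := Real.sqrt (c ^ 2 - 4 * a) with hs_def
  have hss : s ^ 2 = c ^ 2 - 4 * a := Real.sq_sqrt hdisc
  have hs0 : 0 ≤ s := Real.sqrt_nonneg _
  set lam := (c - s) / 2 with hlam_def
  have hsc : s < c := by nlinarith
  have hlam : 0 < lam := by rw [hlam_def]; linarith
  have hlamc : lam ≤ c := by rw [hlam_def]; linarith
  have hA : (c - lam) * lam = a := by
    rw [hlam_def]
    linear_combination (-(1:ℝ)/4) * hss
  have hflam : ∀ u ∈ Icc (0:ℝ) 1, f u ≤ (c - lam) * (lam * u) := by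
    intro u hu
    have := hf7 u hu.1
    rw [← mul_assoc, hA]
    exact this
  obtain ⟨ρ, hρ0, hfρ⟩ : ∃ ρ : ℝ, 0 < ρ ∧ ∀ u ∈ Icc (0:ℝ) 1, ρ * (u * (1 - u)) ≤ f u :=
    kpp_rho f hf1 hf2 hf3 hf4 hf5 hf6
  obtain ⟨L₁, hL₁0, hfL⟩ : ∃ L₁ : ℝ, 0 ≤ L₁ ∧ ∀ u ∈ Icc (0:ℝ) 1, f u ≤ L₁ * (1 - u) :=
    kpp_upperlin f hf1 hf3
  obtain ⟨Mf, hMf0, hMf⟩ : ∃ Mf : ℝ, 0 ≤ Mf ∧ ∀ u ∈ Icc (0:ℝ) 1, |f u| ≤ Mf := by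
    obtain ⟨ξ, _, hξ⟩ := (isCompact_Icc (a := (0:ℝ)) (b := 1)).exists_isMaxOn
      ⟨0, by norm_num⟩ (hf1.continuous.abs.continuousOn)
    exact ⟨|f ξ|, abs_nonneg _, fun u hu => isMaxOn_iff.mp hξ u hu⟩
  set β := min lam (min 1 (ρ / (c + 1))) with hβ_def
  have hβ : 0 < β := lt_min hlam (lt_min one_pos (div_pos hρ0 (by linarith)))
  have hβlam : β ≤ lam := min_le_left _ _
  have hβ1 : β ≤ 1 := le_trans (min_le_right _ _) (min_le_left _ _)
  have hβρc : β ≤ ρ / (c + 1) := le_trans (min_le_right _ _) (min_le_right _ _)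
  have hβρ : β * (c + β) ≤ ρ := by
    have h1 : β * (c + β) ≤ (ρ / (c + 1)) * (c + 1) := by
      apply mul_le_mul hβρc (by linarith) (by linarith) (by positivity)
    rwa [div_mul_cancel₀ _ (by linarith : c + 1 ≠ 0)] at h1
  set K := max β (Real.sqrt L₁ + 1) with hK_def
  have hβK : β ≤ K := le_max_left _ _
  have hK : 0 < K := lt_of_lt_of_le (by positivity) (le_max_right _ _)
  have hKL : L₁ ≤ K * (K + c) := by
    have h1 : Real.sqrt L₁ + 1 ≤ K := le_max_right _ _
    nlinarith [Real.sq_sqrt hL₁0, Real.sqrt_nonneg L₁]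
  -- the sequence of approximations
  set vk : ℕ → ℝ := fun k => 1 / (k + 3) with hvk_def
  set uk : ℕ → ℝ := fun k => 1 - 1 / (k + 3) with huk_def
  have hvkpos : ∀ k, 0 < vk k := fun k => by positivity
  have hvklt : ∀ k, vk k ≤ 1/3 := by
    intro k
    show 1 / ((k:ℝ) + 3) ≤ 1/3
    apply one_div_le_one_div_of_le (by norm_num)
    have : (0:ℝ) ≤ k := Nat.cast_nonneg k
    linarith
  have hvkuk : ∀ k, vk k ≤ uk k := by
    intro k
    have h1 := hvklt k
    rw [huk_def]
    simp only
    linarith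
  have huklt : ∀ k, uk k < 1 := by
    intro k
    rw [huk_def]
    simp only
    linarith [hvkpos k]
  have hvk_anti : ∀ k l : ℕ, k ≤ l → vk l ≤ vk k := by
    intro k l hkl
    show 1 / ((l:ℝ) + 3) ≤ 1 / ((k:ℝ) + 3)
    apply one_div_le_one_div_of_le (by positivity)
    have : (k:ℝ) ≤ l := Nat.cast_le.mpr hkl
    linarith
  have hvk_anti' : ∀ k l : ℕ, k < l → vk l < vk k := by
    intro k l hkl
    show 1 / ((l:ℝ) + 3) < 1 / ((k:ℝ) + 3)
    apply one_div_lt_one_div_of_lt (by positivity)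
    have : (k:ℝ) < l := by exact_mod_cast hkl
    linarith
  have huk_mono : ∀ k l : ℕ, k ≤ l → uk k ≤ uk l := by
    intro k l hkl
    rw [huk_def]
    simp only
    linarith [hvk_anti k l hkl]
  have hIccsub : ∀ k l : ℕ, k ≤ l → Icc (vk k) (uk k) ⊆ Icc (vk l) (uk l) :=
    fun k l hkl => Icc_subset_Icc (hvk_anti k l hkl) (huk_mono k l hkl)
  have hPk : ∀ k : ℕ, ∃ P : ℝ → ℝ, ContinuousOn P (Icc (vk k) (uk k)) ∧
      P (uk k) = β * (uk k * (1 - uk k)) ∧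
      (∀ t ∈ Ioo (vk k) (uk k), HasDerivAt P (c - f t / P t) t) ∧
      (∀ t ∈ Icc (vk k) (uk k), β * (t * (1 - t)) ≤ P t ∧ P t ≤ lam * t ∧ P t ≤ K * (1 - t)) :=
    fun k => exists_P f c lam β K ρ L₁ Mf hf1 hlam hlamc hβ hβlam hβK hK hβρ hKL
      hflam hfL hfρ hMf (vk k) (uk k) (hvkpos k) (hvkuk k) (huklt k)
  choose Q hQc hQa hQd hQb using hPk
  have hellpos : ∀ x : ℝ, x ∈ Ioo (0:ℝ) 1 → 0 < β * (x * (1 - x)) := by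
    intro x hx
    exact mul_pos hβ (mul_pos hx.1 (by linarith [hx.2]))
  have hIccIoo : ∀ k, Icc (vk k) (uk k) ⊆ Ioo (0:ℝ) 1 := by
    intro k x hx
    exact ⟨lt_of_lt_of_le (hvkpos k) hx.1, lt_of_le_of_lt hx.2 (huklt k)⟩
  have hQpos : ∀ k, ∀ t ∈ Icc (vk k) (uk k), 0 < Q k t := by
    intro k t ht
    exact lt_of_lt_of_le (hellpos t (hIccIoo k ht)) (hQb k t ht).1
  -- comparison
  have hcomp : ∀ k l : ℕ, k ≤ l → ∀ t ∈ Icc (vk k) (uk k), Q k t ≤ Q l t := by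
    intro k l hkl
    rcases eq_or_lt_of_le hkl with rfl | hkl'
    · exact fun t _ => le_rfl
    · have hsubIoo : Icc (vk k) (uk k) ⊆ Ioo (vk l) (uk l) := by
        intro x hx
        constructor
        · exact lt_of_lt_of_le (hvk_anti' k l hkl') hx.1
        · calc x ≤ uk k := hx.2
            _ < 1 - 1/(l+3) := by
              rw [huk_def]
              simp only
              linarith [hvk_anti' k l hkl']
      have key := gronwall_nonneg_left (a := vk k) (b := uk k)
        (h := fun t => Q l t - Q k t)
        (dh := fun t => (c - f t / Q l t) - (c - f t / Q k t))
        (g := fun t => f t / (Q k t * Q l t)) (hvkuk k)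
        ?_ ?_ ?_ ?_ ?_
      · intro t ht
        have h5 : (0:ℝ) ≤ Q l t - Q k t := key t ht
        linarith
      · apply ContinuousOn.div
        · exact hf1.continuous.continuousOn
        · exact (hQc k).mul ((hQc l).mono (hIccsub k l hkl))
        · intro t ht
          exact ne_of_gt (mul_pos (hQpos k t ht) (hQpos l t (hIccsub k l hkl ht)))
      · exact ((hQc l).mono (hIccsub k l hkl)).sub (hQc k)
      · intro t ht
        exact (hQd l t (hsubIoo (Ioo_subset_Icc_self ht))).sub (hQd k t ht)
      · intro t ht
        have htI := Ioo_subset_Icc_self ht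
        have h1 : 0 < Q k t := hQpos k t htI
        have h2 : 0 < Q l t := hQpos l t (hIccsub k l hkl htI)
        have heq : (c - f t / Q l t) - (c - f t / Q k t)
            = f t / (Q k t * Q l t) * (Q l t - Q k t) := by
          field_simp
          ring
        exact le_of_eq heq
      · have h1 : uk k ∈ Icc (vk l) (uk l) := Ioo_subset_Icc_self (hsubIoo (right_mem_Icc.2 (hvkuk k)))
        have h2 := (hQb l (uk k) h1).1
        show 0 ≤ Q l (uk k) - Q k (uk k)
        rw [hQa k]
        linarith
  -- clamped versions and the limit p
  set cl : ℕ → ℝ → ℝ := fun k x => max (vk k) (min (uk k) x) with hcl_def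
  have hclmem : ∀ k x, cl k x ∈ Icc (vk k) (uk k) := by
    intro k x
    constructor
    · exact le_max_left _ _
    · simp only [hcl_def, max_le_iff]
      exact ⟨hvkuk k, min_le_left _ _⟩
  have hcleq : ∀ k x, x ∈ Icc (vk k) (uk k) → cl k x = x := by
    intro k x hx
    simp only [hcl_def]
    rw [min_eq_right hx.2, max_eq_right hx.1]
  have hclcont : ∀ k, Continuous (cl k) :=
    fun k => continuous_const.max (continuous_const.min continuous_id)
  set Qb : ℕ → ℝ → ℝ := fun k x =>
    if x ∈ Icc (vk k) (uk k) then Q k (cl k x) else β * (x * (1 - x)) with hQb_def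
  have hQbeq : ∀ k x, x ∈ Icc (vk k) (uk k) → Qb k x = Q k x := by
    intro k x hx
    simp only [hQb_def, if_pos hx, hcleq k x hx]
  have hQbm : ∀ k, Measurable (Qb k) := by
    intro k
    apply Measurable.ite measurableSet_Icc
    · exact ((hQc k).comp_continuous (hclcont k) (hclmem k)).measurable
    · exact (continuous_const.mul (continuous_id.mul (continuous_const.sub continuous_id))).measurable
  have hQbmono : ∀ x : ℝ, Monotone (fun k => Qb k x) := by
    intro x
    intro k l hkl
    show Qb k x ≤ Qb l x
    by_cases hxk : x ∈ Icc (vk k) (uk k)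
    · have hxl : x ∈ Icc (vk l) (uk l) := hIccsub k l hkl hxk
      rw [hQbeq k x hxk, hQbeq l x hxl]
      exact hcomp k l hkl x hxk
    · by_cases hxl : x ∈ Icc (vk l) (uk l)
      · rw [hQbeq l x hxl]
        simp only [hQb_def, if_neg hxk]
        exact (hQb l x hxl).1
      · simp only [hQb_def, if_neg hxk, if_neg hxl]
        exact le_rfl
  have hQble : ∀ k x, x ∈ Icc (0:ℝ) 1 → Qb k x ≤ lam * x ∧ Qb k x ≤ K * (1 - x) := by
    intro k x hx
    by_cases hxk : x ∈ Icc (vk k) (uk k)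
    · rw [hQbeq k x hxk]
      exact ⟨(hQb k x hxk).2.1, (hQb k x hxk).2.2⟩
    · simp only [hQb_def, if_neg hxk]
      constructor
      · nlinarith [hx.1, hx.2, mul_nonneg (mul_nonneg hβ.le hx.1) hx.1]
      · have h1 : β * x ≤ K := le_trans (by nlinarith [hx.2, hx.1]) hβK
        nlinarith [hx.1, hx.2]
  have hQbge : ∀ k x, β * (x * (1 - x)) ≤ Qb k x := by
    intro k x
    by_cases hxk : x ∈ Icc (vk k) (uk k)
    · rw [hQbeq k x hxk]; exact (hQb k x hxk).1
    · simp only [hQb_def, if_neg hxk]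
      exact le_rfl
  have hQbbdd : ∀ x : ℝ, BddAbove (range fun k => Qb k x) := by
    intro x
    rcases le_or_gt x 0 with hx | hx
    · refine ⟨β * (x * (1 - x)), fun y ⟨k, hk⟩ => ?_⟩
      have hnot : x ∉ Icc (vk k) (uk k) := fun hmem => absurd (lt_of_lt_of_le (hvkpos k) hmem.1) (not_lt.2 hx)
      rw [← hk]
      show Qb k x ≤ β * (x * (1 - x))
      simp only [hQb_def, if_neg hnot]
      exact le_rfl
    · rcases le_or_gt 1 x with hx1 | hx1
      · refine ⟨β * (x * (1 - x)), fun y ⟨k, hk⟩ => ?_⟩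
        have hnot : x ∉ Icc (vk k) (uk k) := fun hmem => absurd (lt_of_le_of_lt hmem.2 (huklt k)) (not_lt.2 hx1)
        rw [← hk]
        show Qb k x ≤ β * (x * (1 - x))
        simp only [hQb_def, if_neg hnot]
        exact le_rfl
      · refine ⟨lam * x, fun y ⟨k, hk⟩ => ?_⟩
        rw [← hk]
        show Qb k x ≤ lam * x
        by_cases hxk : x ∈ Icc (vk k) (uk k)
        · rw [hQbeq k x hxk]; exact (hQb k x hxk).2.1
        · simp only [hQb_def, if_neg hxk]
          nlinarith [mul_nonneg (mul_nonneg hβ.le hx.le) hx.le]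
  set p : ℝ → ℝ := fun x => ⨆ k, Qb k x with hp_def
  have hptend : ∀ x, Tendsto (fun k => Qb k x) atTop (𝓝 (p x)) :=
    fun x => tendsto_atTop_ciSup (hQbmono x) (hQbbdd x)
  have hpmeas : Measurable p :=
    measurable_of_tendsto_metrizable' atTop hQbm (tendsto_pi_nhds.mpr hptend)
  have hpge : ∀ x, β * (x * (1 - x)) ≤ p x :=
    fun x => le_trans (hQbge 0 x) (le_ciSup (hQbbdd x) 0)
  have hple : ∀ x ∈ Icc (0:ℝ) 1, p x ≤ lam * x ∧ p x ≤ K * (1 - x) := by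
    intro x hx
    exact ⟨ciSup_le (fun k => (hQble k x hx).1), ciSup_le (fun k => (hQble k x hx).2)⟩
  have hppos : ∀ x ∈ Ioo (0:ℝ) 1, 0 < p x :=
    fun x hx => lt_of_lt_of_le (hellpos x hx) (hpge x)
  -- index bound
  have hidx : ∀ w x : ℝ, w ∈ Ioo (0:ℝ) 1 → x ∈ Ioo (0:ℝ) 1 →
      ∃ k₀ : ℕ, ∀ k, k₀ ≤ k → vk k < w ∧ x < uk k := by
    intro w x hw hx
    obtain ⟨n, hn⟩ := exists_nat_gt (max (1 / w) (1 / (1 - x)))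
    refine ⟨n, fun k hk => ?_⟩
    have hnk : (n:ℝ) ≤ k := by exact_mod_cast hk
    have h1 : 1 / w < n := lt_of_le_of_lt (le_max_left _ _) hn
    have h2 : 1 / (1 - x) < n := lt_of_le_of_lt (le_max_right _ _) hn
    have hk3 : (0:ℝ) < (k:ℝ) + 3 := by positivity
    constructor
    · show 1 / ((k:ℝ) + 3) < w
      rw [div_lt_iff₀ hk3]
      rw [div_lt_iff₀ hw.1] at h1
      nlinarith [hw.1, hnk]
    · show x < 1 - 1 / ((k:ℝ) + 3)
      have h2' : 1 < n * (1 - x) := by rwa [div_lt_iff₀ (by linarith [hx.2])] at h2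
      have h3 : 1 / ((k:ℝ) + 3) < 1 - x := by
        rw [div_lt_iff₀ hk3]
        nlinarith [hx.2, hnk]
      linarith
  -- interval integral identity for p
  have hident : ∀ w x : ℝ, w ∈ Ioo (0:ℝ) 1 → x ∈ Ioo (0:ℝ) 1 → w ≤ x →
      p x = p w + ∫ s in w..x, (c - f s / p s) := by
    intro w x hw hx hwx
    obtain ⟨k₀, hk₀⟩ := hidx w x hw hx
    have hsubIcc : ∀ k, k₀ ≤ k → Icc w x ⊆ Icc (vk k) (uk k) :=
      fun k hk => Icc_subset_Icc (hk₀ k hk).1.le (hk₀ k hk).2.le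
    have hLm : 0 < β * min (w * (1 - w)) (x * (1 - x)) :=
      mul_pos hβ (lt_min (mul_pos hw.1 (by linarith [hw.2])) (mul_pos hx.1 (by linarith [hx.2])))
    set Lm := β * min (w * (1 - w)) (x * (1 - x)) with hLm_def
    have hellLm : ∀ s ∈ Icc w x, Lm ≤ β * (s * (1 - s)) := by
      intro s hs
      have h1 := quad_min hs.1 hs.2
      calc Lm = β * min (w * (1 - w)) (x * (1 - x)) := rfl
        _ ≤ β * (s * (1 - s)) := mul_le_mul_of_nonneg_left h1 hβ.le
    have hQlow : ∀ k, k₀ ≤ k → ∀ s ∈ Icc w x, Lm ≤ Q k s := by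
      intro k hk s hs
      exact le_trans (hellLm s hs) (hQb k s (hsubIcc k hk hs)).1
    have hplow : ∀ s ∈ Icc w x, Lm ≤ p s := fun s hs => le_trans (hellLm s hs) (hpge s)
    have hIccsub01 : Icc w x ⊆ Icc (0:ℝ) 1 := Icc_subset_Icc hw.1.le hx.2.le
    have hcQ : ∀ k, k₀ ≤ k → ContinuousOn (fun s => c - f s / Q k s) (Icc w x) := by
      intro k hk
      apply ContinuousOn.sub continuousOn_const
      apply ContinuousOn.div (hf1.continuous.continuousOn) ((hQc k).mono (hsubIcc k hk))
      intro s hs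
      exact ne_of_gt (lt_of_lt_of_le hLm (hQlow k hk s hs))
    have hInt : ∀ k, k₀ ≤ k → ∫ s in w..x, (c - f s / Q k s) = Q k x - Q k w := by
      intro k hk
      apply intervalIntegral.integral_eq_sub_of_hasDeriv_right_of_le hwx
        ((hQc k).mono (hsubIcc k hk))
      · intro s hs
        have hsI : s ∈ Ioo (vk k) (uk k) :=
          ⟨lt_trans (hk₀ k hk).1 hs.1, lt_trans hs.2 (hk₀ k hk).2⟩
        exact (hQd k s hsI).hasDerivWithinAt
      · apply ContinuousOn.intervalIntegrable
        rw [uIcc_of_le hwx]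
        exact hcQ k hk
    have htendQ : ∀ s ∈ Icc w x, Tendsto (fun k => Q k s) atTop (𝓝 (p s)) := by
      intro s hs
      apply (hptend s).congr'
      filter_upwards [eventually_ge_atTop k₀] with k hk
      exact hQbeq k s (hsubIcc k hk hs)
    have hD0 : (0:ℝ) ≤ |c| + Mf / Lm := by positivity
    set D := |c| + Mf / Lm with hD_def
    have htendI : Tendsto (fun k => ∫ s in w..x, (c - f s / Q k s)) atTop
        (𝓝 (∫ s in w..x, (c - f s / p s))) := by
      apply intervalIntegral.tendsto_integral_filter_of_dominated_convergence (fun _ => D)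
      · filter_upwards [eventually_ge_atTop k₀] with k hk
        apply ContinuousOn.aestronglyMeasurable ?_ measurableSet_uIoc
        rw [uIoc_of_le hwx]
        exact (hcQ k hk).mono Ioc_subset_Icc_self
      · filter_upwards [eventually_ge_atTop k₀] with k hk
        apply ae_of_all
        intro s hs
        rw [uIoc_of_le hwx] at hs
        have hs' : s ∈ Icc w x := Ioc_subset_Icc_self hs
        rw [Real.norm_eq_abs]
        have h1 : |f s| ≤ Mf := hMf s (hIccsub01 hs')
        have h2 : Lm ≤ Q k s := hQlow k hk s hs'
        calc |c - f s / Q k s| ≤ |c| + |f s / Q k s| := by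
              rw [sub_eq_add_neg]
              refine (abs_add_le _ _).trans ?_
              rw [abs_neg]
          _ ≤ D := by
            rw [abs_div, abs_of_pos (lt_of_lt_of_le hLm h2)]
            have h3 := div_le_div₀ hMf0 h1 hLm h2
            rw [hD_def]
            linarith
      · exact intervalIntegrable_const
      · apply ae_of_all
        intro s hs
        rw [uIoc_of_le hwx] at hs
        have hs' : s ∈ Icc w x := Ioc_subset_Icc_self hs
        have h3 : p s ≠ 0 := ne_of_gt (lt_of_lt_of_le hLm (hplow s hs'))
        exact tendsto_const_nhds.sub (Tendsto.div tendsto_const_nhds (htendQ s hs') h3)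
    have h1 : Tendsto (fun k => Q k x - Q k w) atTop (𝓝 (p x - p w)) :=
      (htendQ x (right_mem_Icc.2 hwx)).sub (htendQ w (left_mem_Icc.2 hwx))
    have h2 : Tendsto (fun k => ∫ s in w..x, (c - f s / Q k s)) atTop (𝓝 (p x - p w)) := by
      apply h1.congr'
      filter_upwards [eventually_ge_atTop k₀] with k hk
      exact (hInt k hk).symm
    have h4 := tendsto_nhds_unique h2 htendI
    linarith
  have hGmeas : Measurable (fun s => c - f s / p s) :=
    measurable_const.sub ((hf1.continuous.measurable).div hpmeas)
  have hpkey : ∀ x ∈ Ioo (0:ℝ) 1, ContinuousAt p x ∧ HasDerivAt p (c - f x / p x) x := by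
    intro x hx
    set w := x / 2 with hw_def
    set x' := (1 + x) / 2 with hx'_def
    have hwmem : w ∈ Ioo (0:ℝ) 1 := ⟨by rw [hw_def]; linarith [hx.1], by rw [hw_def]; linarith [hx.1, hx.2]⟩
    have hx'mem : x' ∈ Ioo (0:ℝ) 1 := ⟨by rw [hx'_def]; linarith [hx.1], by rw [hx'_def]; linarith [hx.2]⟩
    have hwx : w < x := by rw [hw_def]; linarith [hx.1]
    have hxx' : x < x' := by rw [hx'_def]; linarith [hx.2]
    have hwx' : w ≤ x' := le_of_lt (lt_trans hwx hxx')
    have hsub01 : Icc w x' ⊆ Ioo (0:ℝ) 1 :=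
      fun y hy => ⟨lt_of_lt_of_le hwmem.1 hy.1, lt_of_le_of_lt hy.2 hx'mem.2⟩
    have hLm : 0 < β * min (w * (1 - w)) (x' * (1 - x')) :=
      mul_pos hβ (lt_min (mul_pos hwmem.1 (by linarith [hwmem.2]))
        (mul_pos hx'mem.1 (by linarith [hx'mem.2])))
    set Lm := β * min (w * (1 - w)) (x' * (1 - x')) with hLm_def
    have hplow : ∀ s ∈ Icc w x', Lm ≤ p s := by
      intro s hs
      refine le_trans ?_ (hpge s)
      calc Lm = β * min (w * (1 - w)) (x' * (1 - x')) := rfl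
        _ ≤ β * (s * (1 - s)) := mul_le_mul_of_nonneg_left (quad_min hs.1 hs.2) hβ.le
    have hD0 : (0:ℝ) ≤ |c| + Mf / Lm := by positivity
    set D := |c| + Mf / Lm with hD_def
    have hDD : ∀ s ∈ Icc w x', |c - f s / p s| ≤ D := by
      intro s hs
      have h1 : |f s| ≤ Mf := hMf s (Icc_subset_Icc hwmem.1.le hx'mem.2.le hs)
      have h2 : Lm ≤ p s := hplow s hs
      calc |c - f s / p s| ≤ |c| + |f s / p s| := by
            rw [sub_eq_add_neg]
            refine (abs_add_le _ _).trans ?_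
            rw [abs_neg]
        _ ≤ D := by
          rw [abs_div, abs_of_pos (lt_of_lt_of_le hLm h2)]
          have h3 := div_le_div₀ hMf0 h1 hLm h2
          rw [hD_def]
          linarith
    have hGint : ∀ y z, y ∈ Icc w x' → z ∈ Icc w x' →
        IntervalIntegrable (fun s => c - f s / p s) volume y z := by
      intro y z hy hz
      have hsub : Set.uIoc y z ⊆ Icc w x' := by
        rcases le_total y z with h | h
        · rw [uIoc_of_le h]
          exact fun s hs => ⟨le_trans hy.1 hs.1.le, le_trans hs.2 hz.2⟩
        · rw [uIoc_of_ge h]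
          exact fun s hs => ⟨le_trans hz.1 hs.1.le, le_trans hs.2 hy.2⟩
      apply IntervalIntegrable.mono_fun (intervalIntegrable_const (c := D))
      · exact hGmeas.aestronglyMeasurable.restrict
      · filter_upwards [ae_restrict_mem measurableSet_uIoc] with s hs
        rw [Real.norm_eq_abs, Real.norm_eq_abs, abs_of_nonneg hD0]
        exact hDD s (hsub hs)
    have hlip : ∀ y z, y ∈ Icc w x' → z ∈ Icc w x' → |p z - p y| ≤ D * |z - y| := by
      have main : ∀ y z, y ∈ Icc w x' → z ∈ Icc w x' → y ≤ z → |p z - p y| ≤ D * |z - y| := by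
        intro y z hy hz hyz
        have hid := hident y z (hsub01 hy) (hsub01 hz) hyz
        have hsub : Set.uIoc y z ⊆ Icc w x' := by
          rw [uIoc_of_le hyz]
          exact fun s hs => ⟨le_trans hy.1 hs.1.le, le_trans hs.2 hz.2⟩
        have hb := intervalIntegral.norm_integral_le_of_norm_le_const
          (C := D) (f := fun s => c - f s / p s) (a := y) (b := z)
          (fun s hs => by rw [Real.norm_eq_abs]; exact hDD s (hsub hs))
        rw [show p z - p y = ∫ s in y..z, (c - f s / p s) by linarith [hid]]
        rw [← Real.norm_eq_abs]
        calc ‖∫ s in y..z, (c - f s / p s)‖ ≤ D * |z - y| := hb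
          _ = D * |z - y| := rfl
      intro y z hy hz
      rcases le_total y z with h | h
      · exact main y z hy hz h
      · have := main z y hz hy h
        rw [abs_sub_comm (p z) (p y), abs_sub_comm z y]
        exact this
    have hpcontOn : ContinuousOn p (Icc w x') := by
      have hL : LipschitzOnWith (Real.toNNReal D) p (Icc w x') := by
        rw [lipschitzOnWith_iff_dist_le_mul]
        intro z hz y' hy'
        rw [Real.dist_eq, Real.dist_eq, Real.coe_toNNReal _ hD0]
        exact hlip y' z hy' hz
      exact hL.continuousOn
    have hcontAt : ContinuousAt p x := hpcontOn.continuousAt (Icc_mem_nhds hwx hxx')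
    refine ⟨hcontAt, ?_⟩
    have hΦd : HasDerivAt (fun y => p w + ∫ s in w..y, (c - f s / p s)) (c - f x / p x) x := by
      apply HasDerivAt.const_add
      apply intervalIntegral.integral_hasDerivAt_right
        (hGint w x (left_mem_Icc.2 hwx') ⟨hwx.le, hxx'.le⟩)
        ⟨univ, univ_mem, hGmeas.aestronglyMeasurable.restrict⟩
      exact continuousAt_const.sub ((hf1.continuous.continuousAt).div hcontAt
        (ne_of_gt (hppos x hx)))
    apply hΦd.congr_of_eventuallyEq
    filter_upwards [Icc_mem_nhds hwx hxx'] with y hy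
    exact hident w y hwmem (hsub01 hy) hy.1
  have hpcontIoo : ContinuousOn p (Ioo (0:ℝ) 1) := fun x hx => ((hpkey x hx).1).continuousWithinAt
  set ζ : ℝ → ℝ := fun x => ∫ s in (1/2 : ℝ)..x, 1 / p s with hζ_def
  have hinvcont : ContinuousOn (fun s => 1 / p s) (Ioo (0:ℝ) 1) := by
    apply ContinuousOn.div continuousOn_const hpcontIoo
    exact fun s hs => ne_of_gt (hppos s hs)
  have huIccsub : ∀ x ∈ Ioo (0:ℝ) 1, uIcc (1/2 : ℝ) x ⊆ Ioo (0:ℝ) 1 := by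
    intro x hx s hs
    constructor
    · calc (0:ℝ) < min (1/2) x := lt_min (by norm_num) hx.1
        _ ≤ s := hs.1
    · calc s ≤ max (1/2) x := hs.2
        _ < 1 := max_lt (by norm_num) hx.2
  have hζd : ∀ x ∈ Ioo (0:ℝ) 1, HasDerivAt ζ (1 / p x) x := by
    intro x hx
    apply intervalIntegral.integral_hasDerivAt_right
    · exact ((hinvcont.mono (huIccsub x hx))).intervalIntegrable
    · exact ⟨Ioo 0 1, isOpen_Ioo.mem_nhds hx, (hinvcont.aestronglyMeasurable measurableSet_Ioo)⟩
    · exact ContinuousAt.div continuousAt_const ((hpkey x hx).1) (ne_of_gt (hppos x hx))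
  have hζmono : StrictMonoOn ζ (Ioo (0:ℝ) 1) := by
    apply strictMonoOn_of_deriv_pos (convex_Ioo 0 1)
    · exact fun x hx => ((hζd x hx).continuousAt).continuousWithinAt
    · intro x hx
      rw [interior_Ioo] at hx
      rw [(hζd x hx).deriv]
      exact div_pos one_pos (hppos x hx)
  have hζub : ∀ x, x ∈ Ico (1/2 : ℝ) 1 → (Real.log (1/2) - Real.log (1 - x)) / K ≤ ζ x := by
    intro x hx
    have hxI : x ∈ Ioo (0:ℝ) 1 := ⟨by linarith [hx.1], hx.2⟩
    have h12x : (1/2:ℝ) ≤ x := hx.1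
    have hFder : ∀ s ∈ uIcc (1/2 : ℝ) x,
        HasDerivAt (fun s => -Real.log (1 - s) / K) (1 / (K * (1 - s))) s := by
      intro s hs
      rw [uIcc_of_le h12x] at hs
      have h1s : 0 < 1 - s := by linarith [hs.2, hx.2]
      have h0 : HasDerivAt (fun s : ℝ => 1 - s) (-1) s := by
        exact ((hasDerivAt_const s (1:ℝ)).sub (hasDerivAt_id' (x := s))).congr_deriv (by norm_num)
      have hder := (h0.log (ne_of_gt h1s)).neg.div_const K
      refine hder.congr_deriv ?_
      field_simp
    have hcont1 : ContinuousOn (fun s => 1 / (K * (1 - s))) (uIcc (1/2:ℝ) x) := by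
      apply ContinuousOn.div continuousOn_const
        (continuousOn_const.mul (continuousOn_const.sub continuousOn_id))
      intro s hs
      rw [uIcc_of_le h12x] at hs
      have h1s : 0 < 1 - s := by linarith [hs.2, hx.2]
      exact (mul_pos hK h1s).ne'
    have hint1 := intervalIntegral.integral_eq_sub_of_hasDerivAt hFder hcont1.intervalIntegrable
    have hmono : ∫ s in (1/2:ℝ)..x, 1 / (K * (1 - s)) ≤ ∫ s in (1/2:ℝ)..x, 1 / p s := by
      apply intervalIntegral.integral_mono_on h12x hcont1.intervalIntegrable
        ((hinvcont.mono (huIccsub x hxI)).intervalIntegrable)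
      intro s hs
      have hsI : s ∈ Ioo (0:ℝ) 1 := ⟨by linarith [hs.1], lt_of_le_of_lt hs.2 hx.2⟩
      have h1 : p s ≤ K * (1 - s) := (hple s ⟨hsI.1.le, hsI.2.le⟩).2
      exact one_div_le_one_div_of_le (hppos s hsI) h1
    have h12e : (1:ℝ) - 1/2 = 1/2 := by norm_num
    rw [h12e] at hint1
    have h2 : (Real.log (1/2) - Real.log (1 - x)) / K
        = -Real.log (1 - x) / K - -Real.log (1/2) / K := by ring
    show (Real.log (1/2) - Real.log (1 - x)) / K ≤ ∫ s in (1/2:ℝ)..x, 1 / p s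
    rw [h2, ← hint1]
    exact hmono
  have hζlb : ∀ x, x ∈ Ioc (0:ℝ) (1/2) → ζ x ≤ (Real.log x - Real.log (1/2)) / lam := by
    intro x hx
    have hxI : x ∈ Ioo (0:ℝ) 1 := ⟨hx.1, by linarith [hx.2]⟩
    have hx12 : x ≤ 1/2 := hx.2
    have hFder : ∀ s ∈ uIcc x (1/2:ℝ),
        HasDerivAt (fun s => Real.log s / lam) (1 / (lam * s)) s := by
      intro s hs
      rw [uIcc_of_le hx12] at hs
      have hs0 : 0 < s := lt_of_lt_of_le hx.1 hs.1
      have hder := (Real.hasDerivAt_log (ne_of_gt hs0)).div_const lam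
      refine hder.congr_deriv ?_
      field_simp
    have hcont1 : ContinuousOn (fun s => 1 / (lam * s)) (uIcc x (1/2:ℝ)) := by
      apply ContinuousOn.div continuousOn_const (continuousOn_const.mul continuousOn_id)
      intro s hs
      rw [uIcc_of_le hx12] at hs
      have hs0 : 0 < s := lt_of_lt_of_le hx.1 hs.1
      exact (mul_pos hlam hs0).ne'
    have hint1 := intervalIntegral.integral_eq_sub_of_hasDerivAt hFder hcont1.intervalIntegrable
    have huIccsub' : uIcc x (1/2:ℝ) ⊆ Ioo (0:ℝ) 1 := by
      rw [uIcc_of_le hx12]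
      exact fun s hs => ⟨lt_of_lt_of_le hx.1 hs.1, by linarith [hs.2]⟩
    have hmono : ∫ s in x..(1/2:ℝ), 1 / (lam * s) ≤ ∫ s in x..(1/2:ℝ), 1 / p s := by
      apply intervalIntegral.integral_mono_on hx12 hcont1.intervalIntegrable
        ((hinvcont.mono huIccsub').intervalIntegrable)
      intro s hs
      have hsI : s ∈ Ioo (0:ℝ) 1 := ⟨lt_of_lt_of_le hx.1 hs.1, by linarith [hs.2]⟩
      have h1 : p s ≤ lam * s := (hple s ⟨hsI.1.le, hsI.2.le⟩).1
      exact one_div_le_one_div_of_le (hppos s hsI) h1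
    have hsymm : ζ x = - ∫ s in x..(1/2:ℝ), 1 / p s := by
      show (∫ s in (1/2:ℝ)..x, 1 / p s) = _
      rw [← intervalIntegral.integral_symm]
    rw [hsymm]
    have h2 : (Real.log (1/2) - Real.log x) / lam ≤ ∫ s in x..(1/2:ℝ), 1 / p s := by
      calc (Real.log (1/2) - Real.log x) / lam
          = ∫ s in x..(1/2:ℝ), 1 / (lam * s) := by rw [hint1]; ring
        _ ≤ _ := hmono
    have h3 : (Real.log x - Real.log (1/2)) / lam = -((Real.log (1/2) - Real.log x) / lam) := by ring
    rw [h3]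
    linarith
  have hsurj : ∀ z : ℝ, ∃ x, x ∈ Ioo (0:ℝ) 1 ∧ ζ x = z := by
    intro z
    set x₂ := 1 - (1/2) * Real.exp (-K * (|z| + 1)) with hx₂_def
    have hexp2pos : 0 < Real.exp (-K * (|z| + 1)) := Real.exp_pos _
    have hexp2le : Real.exp (-K * (|z| + 1)) ≤ 1 := by
      rw [Real.exp_le_one_iff]
      nlinarith [abs_nonneg z, hK]
    have hx₂mem : x₂ ∈ Ico (1/2:ℝ) 1 := by
      constructor
      · rw [hx₂_def]; nlinarith
      · rw [hx₂_def]; nlinarith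
    have h1x₂ : 1 - x₂ = (1/2) * Real.exp (-K * (|z| + 1)) := by rw [hx₂_def]; ring
    have hlog2 : Real.log (1 - x₂) = Real.log (1/2) + (-K * (|z| + 1)) := by
      rw [h1x₂, Real.log_mul (by norm_num) (ne_of_gt hexp2pos), Real.log_exp]
    have hub := hζub x₂ hx₂mem
    have hzx₂ : z < ζ x₂ := by
      rw [hlog2] at hub
      have he : (Real.log (1/2) - (Real.log (1/2) + -K * (|z| + 1))) / K = |z| + 1 := by
        field_simp
        ring
      rw [he] at hub
      have := le_abs_self z
      linarith
    set x₁ := (1/2) * Real.exp (-lam * (|z| + 1)) with hx₁_def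
    have hexp1pos : 0 < Real.exp (-lam * (|z| + 1)) := Real.exp_pos _
    have hexp1le : Real.exp (-lam * (|z| + 1)) ≤ 1 := by
      rw [Real.exp_le_one_iff]
      nlinarith [abs_nonneg z]
    have hx₁mem : x₁ ∈ Ioc (0:ℝ) (1/2) := by
      constructor
      · rw [hx₁_def]; positivity
      · rw [hx₁_def]; nlinarith
    have hlog1 : Real.log x₁ = Real.log (1/2) + (-lam * (|z| + 1)) := by
      rw [hx₁_def, Real.log_mul (by norm_num) (ne_of_gt hexp1pos), Real.log_exp]
    have hlb := hζlb x₁ hx₁mem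
    have hzx₁ : ζ x₁ < z := by
      rw [hlog1] at hlb
      have he : (Real.log (1/2) + -lam * (|z| + 1) - Real.log (1/2)) / lam = -(|z| + 1) := by
        field_simp
        ring
      rw [he] at hlb
      have := neg_abs_le z
      linarith
    clear_value x₁ x₂
    have hb1 : x₁ ≤ 1/2 := hx₁mem.2
    have hb2 : (1/2:ℝ) ≤ x₂ := hx₂mem.1
    have hb3 : 0 < x₁ := hx₁mem.1
    have hb4 : x₂ < 1 := hx₂mem.2
    have hx₁I : x₁ ∈ Ioo (0:ℝ) 1 := ⟨hb3, by linarith⟩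
    have hx₂I : x₂ ∈ Ioo (0:ℝ) 1 := ⟨by linarith, hb4⟩
    have hx₁₂ : x₁ ≤ x₂ := by linarith
    have hIccsub : Icc x₁ x₂ ⊆ Ioo (0:ℝ) 1 :=
      fun y hy => ⟨lt_of_lt_of_le hx₁I.1 hy.1, lt_of_le_of_lt hy.2 hx₂I.2⟩
    have hζcont : ContinuousOn ζ (Icc x₁ x₂) :=
      fun y hy => ((hζd y (hIccsub hy)).continuousAt).continuousWithinAt
    obtain ⟨x, hxmem, hxz⟩ := intermediate_value_Icc hx₁₂ hζcont ⟨hzx₁.le, hzx₂.le⟩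
    exact ⟨x, hIccsub hxmem, hxz⟩
  choose q hq1 hq2 using hsurj
  have hmono_lt : ∀ {y₁ y₂ : ℝ}, y₁ ∈ Ioo (0:ℝ) 1 → y₂ ∈ Ioo (0:ℝ) 1 → ζ y₁ < ζ y₂ → y₁ < y₂ := by
    intro y₁ y₂ h1 h2 h
    by_contra hcon
    push_neg at hcon
    rcases eq_or_lt_of_le hcon with heq | hlt
    · rw [heq] at h
      exact absurd h (lt_irrefl _)
    · exact absurd (hζmono h2 h1 hlt) (by linarith)
  have hqcont : ∀ z, ContinuousAt q z := by
    intro z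
    rw [Metric.continuousAt_iff]
    intro ε hε
    have hx : q z ∈ Ioo (0:ℝ) 1 := hq1 z
    obtain ⟨ε', hε'pos, hε'ε, hε'x, hε'1x⟩ :
        ∃ ε' : ℝ, 0 < ε' ∧ ε' ≤ ε/2 ∧ ε' ≤ q z/2 ∧ ε' ≤ (1 - q z)/2 :=
      ⟨min (ε/2) (min (q z/2) ((1 - q z)/2)),
        lt_min (by linarith) (lt_min (by linarith [hx.1]) (by linarith [hx.2])),
        min_le_left _ _,
        le_trans (min_le_right _ _) (min_le_left _ _),
        le_trans (min_le_right _ _) (min_le_right _ _)⟩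
    have hxm : q z - ε' ∈ Ioo (0:ℝ) 1 := ⟨by linarith [hx.1], by linarith [hx.2]⟩
    have hxp : q z + ε' ∈ Ioo (0:ℝ) 1 := ⟨by linarith [hx.1], by linarith [hx.2]⟩
    have h1 : ζ (q z - ε') < z := by
      have h := hζmono hxm hx (by linarith)
      rwa [hq2 z] at h
    have h2 : z < ζ (q z + ε') := by
      have h := hζmono hx hxp (by linarith)
      rwa [hq2 z] at h
    refine ⟨min (z - ζ (q z - ε')) (ζ (q z + ε') - z), lt_min (by linarith) (by linarith), ?_⟩
    intro w hw
    rw [Real.dist_eq] at hw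
    have hw1 : ζ (q z - ε') < w := by
      have ha := (abs_lt.mp hw).1
      have hb := min_le_left (z - ζ (q z - ε')) (ζ (q z + ε') - z)
      linarith
    have hw2 : w < ζ (q z + ε') := by
      have ha := (abs_lt.mp hw).2
      have hb := min_le_right (z - ζ (q z - ε')) (ζ (q z + ε') - z)
      linarith
    rw [← hq2 w] at hw1 hw2
    have hql : q z - ε' < q w := hmono_lt hxm (hq1 w) hw1
    have hqu : q w < q z + ε' := hmono_lt (hq1 w) hxp hw2
    rw [Real.dist_eq, abs_lt]
    constructor <;> linarith
  have hqd : ∀ z, HasDerivAt q (p (q z)) z := by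
    intro z
    have h1 : HasDerivAt ζ (1 / p (q z)) (q z) := hζd (q z) (hq1 z)
    have hne : (1 : ℝ) / p (q z) ≠ 0 := ne_of_gt (div_pos one_pos (hppos _ (hq1 z)))
    have h2 := HasDerivAt.of_local_left_inverse (hqcont z) h1 hne
      (Eventually.of_forall (fun w => hq2 w))
    have h3 : (1 / p (q z))⁻¹ = p (q z) := by rw [one_div, inv_inv]
    rwa [h3] at h2
  have hqcont' : Continuous q := continuous_iff_continuousAt.2 hqcont
  have hdq : deriv q = fun z => p (q z) := funext fun z => (hqd z).deriv
  have hpq : ∀ z, HasDerivAt (fun z => p (q z)) (c * p (q z) - f (q z)) z := by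
    intro z
    have h1 := ((hpkey (q z) (hq1 z)).2).comp z (hqd z)
    refine h1.congr_deriv ?_
    have hne : p (q z) ≠ 0 := ne_of_gt (hppos _ (hq1 z))
    field_simp
  have hpqc : Continuous (fun z => p (q z)) :=
    continuous_iff_continuousAt.2 fun z => ((hpkey (q z) (hq1 z)).1).comp (hqcont z)
  refine ⟨q, ?_, ?_, ?_, ?_, ?_, ?_⟩
  · have h2 : ContDiff ℝ ((1 : WithTop ℕ∞) + 1) q := by
      rw [contDiff_succ_iff_deriv]
      refine ⟨fun z => (hqd z).differentiableAt, ?_, ?_⟩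
      · intro h
        exact absurd h (by simp)
      · rw [contDiff_one_iff_deriv, hdq]
        constructor
        · exact fun z => (hpq z).differentiableAt
        · rw [funext fun z => (hpq z).deriv]
          exact (continuous_const.mul hpqc).sub (hf1.continuous.comp hqcont')
    have he : ((1 : WithTop ℕ∞) + 1) = 2 := by norm_num
    rwa [he] at h2
  · intro z
    have e1 : deriv (deriv q) z = c * p (q z) - f (q z) := by
      rw [hdq]
      exact (hpq z).deriv
    have e2 : deriv q z = p (q z) := (hqd z).deriv
    rw [e1, e2]
    ring
  · rw [tendsto_order]
    constructor
    · intro b hb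
      exact Eventually.of_forall fun z => lt_trans hb (hq1 z).1
    · intro b hb
      obtain ⟨x₃, hx₃I, hx₃b⟩ : ∃ x₃, x₃ ∈ Ioo (0:ℝ) 1 ∧ x₃ ≤ b :=
        ⟨min (1/2) (b/2),
          ⟨lt_min (by norm_num) (by linarith), lt_of_le_of_lt (min_le_left _ _) (by norm_num)⟩,
          le_trans (min_le_right _ _) (by linarith)⟩
      filter_upwards [eventually_lt_atBot (ζ x₃)] with z hz
      have hlt : q z < x₃ := by
        by_contra hcon
        push_neg at hcon
        rcases eq_or_lt_of_le hcon with heq | hlt'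
        · rw [heq, hq2 z] at hz
          exact lt_irrefl _ hz
        · have h := hζmono hx₃I (hq1 z) hlt'
          rw [hq2 z] at h
          linarith
      linarith
  · rw [tendsto_order]
    constructor
    · intro b hb
      obtain ⟨x₄, hx₄I, hx₄b⟩ : ∃ x₄, x₄ ∈ Ioo (0:ℝ) 1 ∧ b ≤ x₄ :=
        ⟨max (1/2) ((1 + b)/2),
          ⟨lt_of_lt_of_le (by norm_num) (le_max_left _ _), max_lt (by norm_num) (by linarith)⟩,
          le_trans (by linarith) (le_max_right _ _)⟩
      filter_upwards [eventually_gt_atTop (ζ x₄)] with z hz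
      have hlt : x₄ < q z := by
        by_contra hcon
        push_neg at hcon
        rcases eq_or_lt_of_le hcon with heq | hlt'
        · rw [← heq, hq2 z] at hz
          exact lt_irrefl _ hz
        · have h := hζmono (hq1 z) hx₄I hlt'
          rw [hq2 z] at h
          linarith
      linarith
    · intro b hb
      exact Eventually.of_forall fun z => lt_trans (hq1 z).2 hb
  · have hζhalf : ζ (1/2 : ℝ) = 0 := intervalIntegral.integral_same
    have h1 : ζ (q 0) = ζ (1/2 : ℝ) := by rw [hq2 0, hζhalf]
    exact hζmono.injOn (hq1 0) (by norm_num [Set.mem_Ioo] : (1/2:ℝ) ∈ Ioo (0:ℝ) 1) h1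
  · intro z
    rw [(hqd z).deriv]
    exact hppos _ (hq1 z)

/-- For every `c ≥ c₀` the KPP traveling wave problem has a solution, and
for every `c < c₀` it has none. -/
theorem stmt0 (f : ℝ → ℝ) (hf : KPP f) (c : ℝ) :
    (∃ q : ℝ → ℝ, IsKPPWave f c q) ↔ c0 f ≤ c := by
  constructor
  · rintro ⟨q, hq⟩
    by_contra h
    push_neg at h
    exact kpp_no_wave f hf c h q hq
  · intro h
    exact kpp_exists_wave f hf c h
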